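/- arXiv:2505.13947 — 2 statements merged into one kernel-verified Lean document; each statement's English description precedes it below -/
import Mathlib

section
/- For each integer n ≥ 1, consider a recursive estimation process (θ̂_t^{(n)})_{t≥0} with θ̂_0^{(n)} = θ*, per-step conditional tail bound with rate function r(m) = m^κ where κ ≥ γ/2, sample sizes n_0 = n, n_t = c_t·n with c_t = t^{1+s}, and conditional bias of order ρ with κ/γ ≤ ρ < 1: there exist constants 0 < b₁ ≤ b₂ and nonnegative reals v_1, …, v_p, with v_i > 0 for at least one coordinate i, such that for every t ≥ 1 and every coordinate i, almost surely b₁ · v_i · n_{t−1}^{−ρ} ≤ E[θ̂_{t,i}^{(n)} | F_{t−1}] − θ̂_{t−1,i}^{(n)} ≤ b₂ · v_i · n_{t−1}^{−ρ}. Then for every δ > 0: (a) if s > 1/ρ − 1, lim_{n→∞} limsup_{T→∞} P(‖θ̂_T^{(n)} − θ*‖₂ ≥ δ) = 0; (b) if 0 < s < 1/ρ − 1, then for every fixed n, lim_{T→∞} P(‖θ̂_T^{(n)} − θ*‖₂ ≥ δ) = 1. -/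
open MeasureTheory ProbabilityTheory Filter

noncomputable def l2norm {p : ℕ} (x : Fin p → ℝ) : ℝ := Real.sqrt (∑ i, (x i) ^ 2)

lemma abs_apply_le_l2norm {p : ℕ} (x : Fin p → ℝ) (i : Fin p) : |x i| ≤ l2norm x := by
  rw [l2norm, ← Real.sqrt_sq_eq_abs]
  exact Real.sqrt_le_sqrt
    (Finset.single_le_sum (f := fun j => x j ^ 2) (fun j _ => sq_nonneg _) (Finset.mem_univ i))

lemma l2norm_le_sum_abs {p : ℕ} (x : Fin p → ℝ) : l2norm x ≤ ∑ i, |x i| := by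
  rw [l2norm]
  have h1 : ∑ i, (x i) ^ 2 ≤ (∑ i, |x i|) ^ 2 := by
    calc ∑ i, (x i) ^ 2 = ∑ i, |x i| ^ 2 := by simp [sq_abs]
    _ ≤ (∑ i, |x i|) ^ 2 := Finset.sum_sq_le_sq_sum_of_nonneg (fun i _ => abs_nonneg _)
  calc Real.sqrt (∑ i, (x i)^2) ≤ Real.sqrt ((∑ i, |x i|)^2) := Real.sqrt_le_sqrt h1
  _ = ∑ i, |x i| := Real.sqrt_sq (Finset.sum_nonneg fun i _ => abs_nonneg _)

lemma sum_odds (m : ℕ) : ∑ k ∈ Finset.range m, ((2*k+3 : ℝ)) = (m:ℝ)^2 + 2*m := by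
  induction m with
  | zero => simp
  | succ m ih => rw [Finset.sum_range_succ, ih]; push_cast; ring

lemma sq_le_discretize (q h : ℝ) (hq : 0 ≤ q) (hh : 0 < h) :
    ENNReal.ofReal (q^2) ≤ ENNReal.ofReal (h^2)
      + ∑' k : ℕ, (if ((k:ℝ)+1)*h < q then ENNReal.ofReal ((2*k+3)*h^2) else 0) := by
  set K := ⌈q/h⌉₊ with hK
  have hqK : q ≤ (K:ℝ) * h := by
    have := Nat.le_ceil (q/h)
    calc q = (q/h)*h := by field_simp
    _ ≤ (K:ℝ)*h := by nlinarith
  have hKlt : (K:ℝ) < q/h + 1 := Nat.ceil_lt_add_one (div_nonneg hq hh.le)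
  have key : ∀ k ∈ Finset.range (K-1), ((k:ℝ)+1)*h < q := by
    intro k hk
    have hk' : (k:ℝ) + 1 ≤ (K:ℝ) - 1 := by
      have : k + 1 ≤ K - 1 := Finset.mem_range.mp hk
      have hK1 : 1 ≤ K := le_trans (Nat.le_add_left 1 k) this |>.trans (Nat.sub_le _ _)
      have : (k:ℝ) + 1 ≤ ((K:ℝ)) - 1 := by
        have h2 : k + 2 ≤ K := by omega
        have := (Nat.cast_le (α := ℝ)).mpr h2
        push_cast at this ⊢; linarith
      exact this
    have hKq : ((K:ℝ) - 1) * h < q := by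
      have : (K:ℝ) - 1 < q/h := by linarith
      calc ((K:ℝ)-1)*h < (q/h)*h := by nlinarith
      _ = q := by field_simp
    calc ((k:ℝ)+1)*h ≤ ((K:ℝ)-1)*h := by nlinarith
    _ < q := hKq
  have hmain : q^2 ≤ h^2 + ∑ k ∈ Finset.range (K-1), (2*k+3 : ℝ)*h^2 := by
    have hsum : ∑ k ∈ Finset.range (K-1), (2*(k:ℝ)+3)*h^2
        = (((K-1:ℕ):ℝ)^2 + 2*((K-1:ℕ):ℝ)) * h^2 := by
      rw [← Finset.sum_mul, sum_odds]
    rw [hsum]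
    rcases Nat.eq_zero_or_pos K with h0 | hKpos
    · have : q ≤ 0 := by
        have := hqK; rw [h0] at this; simpa using this
      have hq0 : q = 0 := le_antisymm this hq
      simp [hq0, h0]
      positivity
    · have hcast : ((K-1:ℕ):ℝ) = (K:ℝ) - 1 := by
        have : (1:ℕ) ≤ K := hKpos
        push_cast [Nat.cast_sub this]; ring
      rw [hcast]
      have : q^2 ≤ ((K:ℝ)*h)^2 := by nlinarith
      nlinarith
  calc ENNReal.ofReal (q^2) ≤ ENNReal.ofReal (h^2 + ∑ k ∈ Finset.range (K-1), (2*k+3 : ℝ)*h^2) :=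
        ENNReal.ofReal_le_ofReal hmain
  _ = ENNReal.ofReal (h^2) + ENNReal.ofReal (∑ k ∈ Finset.range (K-1), (2*(k:ℝ)+3)*h^2) := by
      rw [ENNReal.ofReal_add (by positivity) (by positivity)]
  _ ≤ ENNReal.ofReal (h^2) + ∑' k : ℕ, (if ((k:ℝ)+1)*h < q then ENNReal.ofReal ((2*k+3)*h^2) else 0) := by
      gcongr
      rw [ENNReal.ofReal_sum_of_nonneg (fun k _ => by positivity)]
      calc ∑ k ∈ Finset.range (K-1), ENNReal.ofReal ((2*(k:ℝ)+3)*h^2)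
          = ∑ k ∈ Finset.range (K-1), (if ((k:ℝ)+1)*h < q then ENNReal.ofReal ((2*k+3)*h^2) else 0) := by
            exact Finset.sum_congr rfl (fun k hk => by rw [if_pos (key k hk)])
      _ ≤ _ := ENNReal.sum_le_tsum _

lemma exp_neg_le (m : ℕ) (hm : 1 ≤ m) (x : ℝ) (hx : 0 < x) :
    Real.exp (-x) ≤ (m:ℝ)^m / x^m := by
  have hm0 : (0:ℝ) < m := by exact_mod_cast hm
  have hxm : (x/(m:ℝ))^m ≤ Real.exp x := by
    have h1 : x/(m:ℝ) + 1 ≤ Real.exp (x/(m:ℝ)) := Real.add_one_le_exp _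
    have h2 : (x/(m:ℝ))^m ≤ (x/(m:ℝ) + 1)^m := by
      apply pow_le_pow_left₀ (by positivity); linarith
    have h3 : (x/(m:ℝ) + 1)^m ≤ (Real.exp (x/(m:ℝ)))^m := by
      apply pow_le_pow_left₀ (by positivity) h1
    calc (x/(m:ℝ))^m ≤ (Real.exp (x/(m:ℝ)))^m := le_trans h2 h3
    _ = Real.exp x := by rw [← Real.exp_nat_mul]; congr 1; field_simp
  have hxp : (0:ℝ) < x^m := by positivity
  rw [Real.exp_neg, div_pow] at *
  rw [inv_le_iff_one_le_mul₀ (Real.exp_pos x), div_mul_eq_mul_div, le_div_iff₀ hxp]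
  rw [div_le_iff₀ (by positivity)] at hxm
  linarith

lemma summable_aux (γ : ℝ) (hγ : 0 < γ) :
    Summable (fun k : ℕ => (2*(k:ℝ)+3) * Real.exp (-((k:ℝ)+1)^γ)) := by
  set m : ℕ := max 1 ⌈3/γ⌉₊ with hmdef
  have hm1 : 1 ≤ m := le_max_left _ _
  have hm3 : 3 ≤ (m:ℝ) * γ := by
    have h1 : (3/γ : ℝ) ≤ (⌈3/γ⌉₊ : ℝ) := Nat.le_ceil _
    have h2 : ((⌈3/γ⌉₊:ℕ):ℝ) ≤ (m:ℝ) := by exact_mod_cast le_max_right 1 ⌈3/γ⌉₊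
    have := le_trans h1 h2
    rw [div_le_iff₀ hγ] at this; linarith
  have hbound : ∀ k : ℕ, (2*(k:ℝ)+3) * Real.exp (-((k:ℝ)+1)^γ)
      ≤ 3 * (m:ℝ)^m * (((k:ℝ)+1)^2)⁻¹ := by
    intro k
    have hk1 : (1:ℝ) ≤ (k:ℝ)+1 := by have : (0:ℝ) ≤ (k:ℝ) := Nat.cast_nonneg k; linarith
    have hx : (0:ℝ) < ((k:ℝ)+1)^γ := Real.rpow_pos_of_pos (by positivity) _
    have h1 : Real.exp (-((k:ℝ)+1)^γ) ≤ (m:ℝ)^m / (((k:ℝ)+1)^γ)^m :=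
      exp_neg_le m hm1 _ hx
    have h2 : ((k:ℝ)+1)^(3:ℝ) ≤ (((k:ℝ)+1)^γ)^m := by
      rw [← Real.rpow_natCast (((k:ℝ)+1)^γ) m, ← Real.rpow_mul (by positivity)]
      exact Real.rpow_le_rpow_of_exponent_le hk1 (by linarith)
    have h3 : ((k:ℝ)+1)^(3:ℝ) = ((k:ℝ)+1)^(3:ℕ) := by
      rw [← Real.rpow_natCast ((k:ℝ)+1) 3]; norm_num
    have hck : (0:ℝ) < ((k:ℝ)+1)^(3:ℕ) := by positivity
    have h4 : Real.exp (-((k:ℝ)+1)^γ) ≤ (m:ℝ)^m / ((k:ℝ)+1)^(3:ℕ) := by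
      refine le_trans h1 ?_
      apply div_le_div_of_nonneg_left (by positivity) hck
      rw [← h3]; exact h2
    have h5 : (2*(k:ℝ)+3) ≤ 3*((k:ℝ)+1) := by linarith
    calc (2*(k:ℝ)+3) * Real.exp (-((k:ℝ)+1)^γ)
        ≤ (3*((k:ℝ)+1)) * ((m:ℝ)^m / ((k:ℝ)+1)^(3:ℕ)) := by
          apply mul_le_mul h5 h4 (Real.exp_nonneg _) (by positivity)
    _ = 3 * (m:ℝ)^m * (((k:ℝ)+1)^2)⁻¹ := by
        field_simp
  have hs : Summable (fun k : ℕ => 3 * (m:ℝ)^m * (((k:ℝ)+1)^2)⁻¹) := by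
    apply Summable.mul_left
    have : Summable (fun k : ℕ => (((k:ℝ))^2)⁻¹) := by
      simpa using Real.summable_one_div_nat_pow.mpr (by norm_num : 1 < 2)
    have := (summable_nat_add_iff 1).mpr this
    simpa [Nat.cast_add] using this
  exact Summable.of_nonneg_of_le (fun k => by positivity) hbound hs

lemma moment_from_tail {Ω : Type} [MeasurableSpace Ω] (μ : Measure Ω) [IsProbabilityMeasure μ]
    (Y : Ω → ℝ) (hY : Measurable Y) (C₁ C₂ γ a : ℝ)
    (hC₁ : 0 < C₁) (hC₂ : 0 < C₂) (hγ : 0 < γ) (ha : 0 < a)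
    (htail : ∀ u : ℝ, 0 < u → (μ {ω | u < |Y ω|}).toReal ≤ C₁ * Real.exp (-(C₂ * a * u ^ γ))) :
    Integrable (fun ω => Y ω ^ 2) μ ∧
    ∫ ω, Y ω ^ 2 ∂μ ≤
      (1 + C₁ * ∑' k:ℕ, (2*(k:ℝ)+3) * Real.exp (-((k:ℝ)+1)^γ)) * (C₂*a) ^ (-(2/γ)) := by
  set S := ∑' k:ℕ, (2*(k:ℝ)+3) * Real.exp (-((k:ℝ)+1)^γ) with hSdef
  have hSsum := summable_aux γ hγ
  have hS0 : 0 ≤ S := tsum_nonneg (fun k => by positivity)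
  have hca : (0:ℝ) < C₂ * a := by positivity
  set h : ℝ := (C₂*a) ^ (-(1/γ)) with hhdef
  have hhpos : 0 < h := Real.rpow_pos_of_pos hca _
  have hhγ : h ^ γ = (C₂*a)⁻¹ := by
    rw [hhdef, ← Real.rpow_mul hca.le, show (-(1/γ))*γ = -1 by field_simp]
    exact Real.rpow_neg_one _
  have hsets : ∀ k : ℕ, MeasurableSet {ω | ((k:ℝ)+1)*h < |Y ω|} :=
    fun k => measurableSet_lt measurable_const hY.abs
  have htail_k : ∀ k : ℕ, μ {ω | ((k:ℝ)+1)*h < |Y ω|}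
      ≤ ENNReal.ofReal (C₁ * Real.exp (-((k:ℝ)+1)^γ)) := by
    intro k
    have hu : (0:ℝ) < ((k:ℝ)+1)*h := by positivity
    have hb := htail _ hu
    have harg : C₂ * a * (((k:ℝ)+1)*h)^γ = ((k:ℝ)+1)^γ := by
      rw [Real.mul_rpow (by positivity) hhpos.le, hhγ]
      field_simp
    rw [harg] at hb
    exact (ENNReal.le_ofReal_iff_toReal_le (measure_ne_top μ _) (by positivity)).mpr hb
  have hpt : ∀ ω, ENNReal.ofReal (Y ω^2) ≤ ENNReal.ofReal (h^2)
      + ∑' k : ℕ, Set.indicator {ω' | ((k:ℝ)+1)*h < |Y ω'|}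
          (fun _ => ENNReal.ofReal ((2*(k:ℝ)+3)*h^2)) ω := by
    intro ω
    have hd := sq_le_discretize |Y ω| h (abs_nonneg _) hhpos
    rw [sq_abs] at hd
    refine hd.trans ?_
    gcongr with k
    rw [Set.indicator_apply]
    simp only [Set.mem_setOf_eq]
    split_ifs <;> simp
  have hlin : ∫⁻ ω, ENNReal.ofReal (Y ω^2) ∂μ ≤ ENNReal.ofReal (h^2 * (1 + C₁ * S)) := by
    calc ∫⁻ ω, ENNReal.ofReal (Y ω^2) ∂μ
        ≤ ∫⁻ ω, (ENNReal.ofReal (h^2)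
            + ∑' k : ℕ, Set.indicator {ω' | ((k:ℝ)+1)*h < |Y ω'|}
              (fun _ => ENNReal.ofReal ((2*(k:ℝ)+3)*h^2)) ω) ∂μ := lintegral_mono hpt
    _ = ENNReal.ofReal (h^2)
          + ∑' k : ℕ, ENNReal.ofReal ((2*(k:ℝ)+3)*h^2) * μ {ω' | ((k:ℝ)+1)*h < |Y ω'|} := by
        rw [lintegral_add_left measurable_const]
        simp only [lintegral_const, measure_univ, mul_one]
        congr 1
        rw [lintegral_tsum (fun k => (measurable_const.indicator (hsets k)).aemeasurable)]
        exact tsum_congr (fun k => lintegral_indicator_const (hsets k) _)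
    _ ≤ ENNReal.ofReal (h^2)
          + ∑' k : ℕ, ENNReal.ofReal ((2*(k:ℝ)+3)*h^2)
              * ENNReal.ofReal (C₁ * Real.exp (-((k:ℝ)+1)^γ)) := by
        gcongr
        exact htail_k _
    _ = ENNReal.ofReal (h^2) + ENNReal.ofReal (h^2 * (C₁ * S)) := by
        congr 1
        have heq : ∀ k : ℕ, ENNReal.ofReal ((2*(k:ℝ)+3)*h^2)
            * ENNReal.ofReal (C₁ * Real.exp (-((k:ℝ)+1)^γ))
            = ENNReal.ofReal ((h^2 * C₁) * ((2*(k:ℝ)+3) * Real.exp (-((k:ℝ)+1)^γ))) := by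
          intro k
          rw [← ENNReal.ofReal_mul (by positivity)]
          ring_nf
        rw [tsum_congr heq, ← ENNReal.ofReal_tsum_of_nonneg
          (fun k => by positivity) (hSsum.mul_left _)]
        rw [tsum_mul_left]
        congr 1
        ring
    _ = ENNReal.ofReal (h^2 * (1 + C₁ * S)) := by
        rw [← ENNReal.ofReal_add (by positivity) (by positivity)]
        congr 1
        ring
  have hint : Integrable (fun ω => Y ω ^ 2) μ := by
    refine ⟨((hY.pow_const 2).aestronglyMeasurable), ?_⟩
    rw [hasFiniteIntegral_iff_norm]
    have : ∀ ω, ENNReal.ofReal ‖Y ω^2‖ = ENNReal.ofReal (Y ω^2) := by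
      intro ω; rw [Real.norm_eq_abs, abs_of_nonneg (sq_nonneg _)]
    rw [lintegral_congr this]
    exact lt_of_le_of_lt hlin ENNReal.ofReal_lt_top
  refine ⟨hint, ?_⟩
  have h2 : h^2 = (C₂*a) ^ (-(2/γ)) := by
    rw [hhdef, ← Real.rpow_natCast ((C₂*a) ^ (-(1/γ))) 2, ← Real.rpow_mul hca.le]
    congr 1
    push_cast
    ring
  rw [integral_eq_lintegral_of_nonneg_ae (Filter.Eventually.of_forall (fun ω => sq_nonneg _))
    (hY.pow_const 2).aestronglyMeasurable]
  refine le_trans (ENNReal.toReal_le_of_le_ofReal (by positivity) hlin) ?_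
  rw [h2]
  ring_nf
  exact le_refl _

lemma summable_shift_iff (q : ℝ) : Summable (fun j:ℕ => ((j:ℝ)+1)^(-q)) ↔ 1 < q := by
  have h1 : (fun j:ℕ => ((j:ℝ)+1)^(-q)) = (fun j:ℕ => ((((j+1):ℕ)):ℝ)^(-q)) := by
    funext j; push_cast; ring_nf
  have h2 : Summable (fun j:ℕ => ((((j+1):ℕ)):ℝ)^(-q)) ↔ Summable (fun n:ℕ => ((n:ℝ))^(-q)) :=
    summable_nat_add_iff (f := fun n:ℕ => ((n:ℝ))^(-q)) 1
  rw [h1, h2, Real.summable_nat_rpow]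
  constructor <;> intro <;> linarith

lemma cheby {Ω : Type} [MeasurableSpace Ω] (μ : Measure Ω) [IsProbabilityMeasure μ]
    (f : Ω → ℝ) (hint : Integrable (fun ω => f ω^2) μ) (ε : ℝ) (hε : 0 < ε) :
    (μ {ω | ε ≤ |f ω|}).toReal ≤ (∫ ω, f ω^2 ∂μ) / ε^2 := by
  have h1 : {ω | ε ≤ |f ω|} ⊆ {ω | ε^2 ≤ f ω^2} := by
    intro ω hω
    simp only [Set.mem_setOf_eq] at *
    nlinarith [sq_abs (f ω), abs_nonneg (f ω)]
  have h2 := mul_meas_ge_le_integral_of_nonneg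
    (Filter.Eventually.of_forall (fun ω => sq_nonneg (f ω))) hint (ε^2)
  have h3 : (μ {ω | ε ≤ |f ω|}).toReal ≤ (μ {x | ε^2 ≤ f x^2}).toReal :=
    ENNReal.toReal_mono (measure_ne_top μ _) (measure_mono h1)
  rw [le_div_iff₀ (by positivity)]
  calc (μ {ω | ε ≤ |f ω|}).toReal * ε^2 = ε^2 * (μ {ω | ε ≤ |f ω|}).toReal := by ring
  _ ≤ ε^2 * (μ {x | ε^2 ≤ f x^2}).toReal := by nlinarith [sq_nonneg ε]
  _ ≤ ∫ ω, f ω^2 ∂μ := h2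

lemma c_one_le (s : ℝ) (hs : 0 < s) (c : ℕ → ℝ) (hc0 : c 0 = 1)
    (hc : ∀ t : ℕ, 1 ≤ t → c t = (t : ℝ) ^ ((1 : ℝ) + s)) (t : ℕ) : 1 ≤ c t := by
  rcases Nat.eq_zero_or_pos t with h | h
  · rw [h, hc0]
  · rw [hc t h]
    calc (1:ℝ) = (1:ℝ) ^ ((1:ℝ)+s) := (Real.one_rpow _).symm
    _ ≤ (t:ℝ) ^ ((1:ℝ)+s) :=
        Real.rpow_le_rpow (by norm_num) (by exact_mod_cast h) (by linarith)

lemma csum_le (s : ℝ) (hs : 0 < s) (c : ℕ → ℝ) (hc0 : c 0 = 1)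
    (hc : ∀ t : ℕ, 1 ≤ t → c t = (t : ℝ) ^ ((1 : ℝ) + s))
    (e : ℝ) (he : 1 < (1+s)*e) (n : ℝ) (hn : 1 ≤ n) (T : ℕ) :
    ∑ t ∈ Finset.range T, (c t * n)^(-e)
      ≤ (1 + ∑' j:ℕ, ((j:ℝ)+1)^(-((1+s)*e))) * n^(-e) := by
  have he0 : 0 < e := by nlinarith
  have hsummable : Summable (fun j:ℕ => ((j:ℝ)+1)^(-((1+s)*e))) := (summable_shift_iff _).mpr he
  have hsplit : ∀ t : ℕ, (c t * n)^(-e) = (c t)^(-e) * n^(-e) := fun t =>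
    Real.mul_rpow (le_trans zero_le_one (c_one_le s hs c hc0 hc t)) (by linarith)
  have hterm : ∀ t : ℕ, (c (t+1))^(-e) = ((t:ℝ)+1)^(-((1+s)*e)) := by
    intro t
    rw [hc (t+1) (by omega), ← Real.rpow_mul (by positivity)]
    push_cast
    ring_nf
  have hsum : ∑ t ∈ Finset.range T, (c t)^(-e) ≤ 1 + ∑' j:ℕ, ((j:ℝ)+1)^(-((1+s)*e)) := by
    rcases T with _ | T'
    · simp only [Finset.range_zero, Finset.sum_empty]
      have : 0 ≤ ∑' j:ℕ, ((j:ℝ)+1)^(-((1+s)*e)) :=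
        tsum_nonneg (fun j => Real.rpow_nonneg (by positivity) _)
      linarith
    · rw [Finset.sum_range_succ' (fun t => (c t)^(-e)) T']
      have h1 : (c 0)^(-e) = 1 := by rw [hc0, Real.one_rpow]
      rw [h1]
      have h2 : ∑ t ∈ Finset.range T', (c (t+1))^(-e)
          ≤ ∑' j:ℕ, ((j:ℝ)+1)^(-((1+s)*e)) := by
        rw [Finset.sum_congr rfl (fun t _ => hterm t)]
        exact Summable.sum_le_tsum _ (fun t _ => Real.rpow_nonneg (by positivity) _) hsummable
      linarith
  calc ∑ t ∈ Finset.range T, (c t * n)^(-e)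
      = (∑ t ∈ Finset.range T, (c t)^(-e)) * n^(-e) := by
        rw [Finset.sum_mul]; exact Finset.sum_congr rfl (fun t _ => hsplit t)
  _ ≤ (1 + ∑' j:ℕ, ((j:ℝ)+1)^(-((1+s)*e))) * n^(-e) := by
      have : (0:ℝ) ≤ n^(-e) := Real.rpow_nonneg (by linarith) _
      nlinarith

lemma csum_diverge (s ρ : ℝ) (hs : 0 < s) (hρe : (1+s)*ρ ≤ 1) (c : ℕ → ℝ) (hc0 : c 0 = 1)
    (hc : ∀ t : ℕ, 1 ≤ t → c t = (t : ℝ) ^ ((1 : ℝ) + s)) :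
    Filter.Tendsto (fun T : ℕ => ∑ t ∈ Finset.range T, (c t)^(-ρ)) Filter.atTop Filter.atTop := by
  have hnonneg : ∀ t : ℕ, 0 ≤ (c t)^(-ρ) := fun t =>
    Real.rpow_nonneg (le_trans zero_le_one (c_one_le s hs c hc0 hc t)) _
  rw [← not_summable_iff_tendsto_nat_atTop_of_nonneg hnonneg]
  intro hsum
  have h1 : Summable (fun t : ℕ => (c (t+1))^(-ρ)) := (summable_nat_add_iff 1).mpr hsum
  have h2 : (fun t : ℕ => (c (t+1))^(-ρ)) = fun t : ℕ => ((t:ℝ)+1)^(-((1+s)*ρ)) := by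
    funext t
    rw [hc (t+1) (by omega), ← Real.rpow_mul (by positivity)]
    push_cast
    ring_nf
  rw [h2] at h1
  have := (summable_shift_iff _).mp h1
  linarith

lemma integrable_mul_of_sq {Ω : Type} [MeasurableSpace Ω] {μ : Measure Ω} {f g : Ω → ℝ}
    (hfm : AEStronglyMeasurable f μ) (hgm : AEStronglyMeasurable g μ)
    (hf : Integrable (fun ω => f ω^2) μ) (hg : Integrable (fun ω => g ω^2) μ) :
    Integrable (f * g) μ := by
  refine Integrable.mono' (((hf.add hg).div_const 2)) (hfm.mul hgm) ?_
  refine Filter.Eventually.of_forall (fun ω => ?_)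
  simp only [Pi.mul_apply, Real.norm_eq_abs, Pi.add_apply, Pi.div_apply]
  rw [abs_mul]
  nlinarith [sq_nonneg (|f ω| - |g ω|), sq_abs (f ω), sq_abs (g ω), abs_nonneg (f ω), abs_nonneg (g ω)]

lemma main_aux {Ω : Type} [mΩ : MeasurableSpace Ω] (μ : Measure Ω) [IsProbabilityMeasure μ]
    (F : Filtration ℕ mΩ) (X : ℕ → Ω → ℝ)
    (hadapt : ∀ t, StronglyMeasurable[F t] (X t))
    (hX0 : MemLp (X 0) 2 μ)
    (C₁ C₂ γ : ℝ) (hC₁ : 0 < C₁) (hC₂ : 0 < C₂) (hγ : 0 < γ)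
    (a : ℕ → ℝ) (ha : ∀ t, 0 < a t)
    (htail : ∀ t : ℕ, ∀ u : ℝ, 0 < u →
      (μ {ω | u < |X (t+1) ω - X t ω|}).toReal ≤ C₁ * Real.exp (-(C₂ * a t * u ^ γ)))
    (lo hi : ℕ → ℝ) (hlo : ∀ t, 0 ≤ lo t) (hhi : ∀ t, 0 ≤ hi t)
    (hbias : ∀ t : ℕ, ∀ᵐ ω ∂μ,
      lo t ≤ (μ[X (t+1) | F t]) ω - X t ω ∧ (μ[X (t+1) | F t]) ω - X t ω ≤ hi t) :
    ∃ M G : ℕ → Ω → ℝ,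
      (∀ T, Measurable (M T)) ∧
      (∀ T, MemLp (X T) 2 μ) ∧
      (∀ T, Integrable (fun ω => (M T ω)^2) μ) ∧
      (∀ T, ∫ ω, (M T ω)^2 ∂μ ≤ ∑ t ∈ Finset.range T,
          (2 * ((1 + C₁ * ∑' k:ℕ, (2*(k:ℝ)+3) * Real.exp (-((k:ℝ)+1)^γ))
             * (C₂ * a t) ^ (-(2/γ))) + 2 * (hi t)^2)) ∧
      (∀ T ω, X T ω = X 0 ω + M T ω + G T ω) ∧
      (∀ᵐ ω ∂μ, ∀ T, (∑ t ∈ Finset.range T, lo t) ≤ G T ω ∧ G T ω ≤ ∑ t ∈ Finset.range T, hi t) := by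
  classical
  set S := ∑' k:ℕ, (2*(k:ℝ)+3) * Real.exp (-((k:ℝ)+1)^γ) with hSdef
  have hXmeas : ∀ t, Measurable (X t) := fun t => ((hadapt t).mono (F.le t)).measurable
  set Y : ℕ → Ω → ℝ := fun t ω => X (t+1) ω - X t ω with hYdef
  have hYmeas : ∀ t, Measurable (Y t) := fun t => (hXmeas (t+1)).sub (hXmeas t)
  have hmom := fun t => moment_from_tail μ (Y t) (hYmeas t) C₁ C₂ γ (a t) hC₁ hC₂ hγ (ha t)
    (htail t)
  have hYmem : ∀ t, MemLp (Y t) 2 μ := fun t =>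
    (memLp_two_iff_integrable_sq (hYmeas t).aestronglyMeasurable).mpr (hmom t).1
  have hXmem : ∀ t, MemLp (X t) 2 μ := by
    intro t
    induction t with
    | zero => exact hX0
    | succ t ih =>
      have : X (t+1) = fun ω => X t ω + Y t ω := by funext ω; simp [hYdef]
      rw [this]; exact ih.add (hYmem t)
  have hXint : ∀ t, Integrable (X t) μ := fun t => (hXmem t).integrable one_le_two
  set g : ℕ → Ω → ℝ := fun t ω => (μ[X (t+1) | F t]) ω - X t ω with hgdef
  set d : ℕ → Ω → ℝ := fun t ω => X (t+1) ω - (μ[X (t+1) | F t]) ω with hddef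
  have hgmeas : ∀ t, Measurable (g t) := fun t =>
    ((stronglyMeasurable_condExp.mono (F.le t)).measurable).sub (hXmeas t)
  have hgbd : ∀ t, ∀ᵐ ω ∂μ, |g t ω| ≤ hi t := by
    intro t
    filter_upwards [hbias t] with ω hω
    exact abs_le.mpr ⟨le_trans (by linarith [hlo t, hhi t]) hω.1, hω.2⟩
  have hgmem : ∀ t, MemLp (g t) 2 μ := by
    intro t
    refine MemLp.of_bound (hgmeas t).aestronglyMeasurable (hi t) ?_
    filter_upwards [hgbd t] with ω hω
    simpa [Real.norm_eq_abs] using hω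
  have hcondmem : ∀ t, MemLp (μ[X (t+1) | F t]) 2 μ := by
    intro t
    have : μ[X (t+1) | F t] = fun ω => X t ω + g t ω := by funext ω; simp [hgdef]
    rw [this]; exact (hXmem t).add (hgmem t)
  have hdmem : ∀ t, MemLp (d t) 2 μ := by
    intro t
    have : d t = fun ω => X (t+1) ω - (μ[X (t+1) | F t]) ω := rfl
    exact ((hXmem (t+1)).sub (hcondmem t))
  have hdmeas : ∀ t, Measurable (d t) := fun t =>
    (hXmeas (t+1)).sub (stronglyMeasurable_condExp.mono (F.le t)).measurable
  have hdint2 : ∀ t, Integrable (fun ω => (d t ω)^2) μ := fun t => (hdmem t).integrable_sq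
  have hd2bd : ∀ t, ∫ ω, (d t ω)^2 ∂μ
      ≤ 2 * ((1 + C₁ * S) * (C₂ * a t) ^ (-(2/γ))) + 2 * (hi t)^2 := by
    intro t
    have hg2int : Integrable (fun ω => (g t ω)^2) μ := (hgmem t).integrable_sq
    have h1 : ∫ ω, (d t ω)^2 ∂μ ≤ ∫ ω, (2 * (Y t ω)^2 + 2 * (g t ω)^2) ∂μ := by
      apply integral_mono (hdint2 t) (((hmom t).1.const_mul 2).add (hg2int.const_mul 2))
      intro ω
      show (d t ω)^2 ≤ 2 * (Y t ω)^2 + 2 * (g t ω)^2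
      have hdd : d t ω = Y t ω - g t ω := by simp only [hddef, hYdef, hgdef]; ring
      rw [hdd]; nlinarith [sq_nonneg (Y t ω + g t ω)]
    have h2 : ∫ ω, (2 * (Y t ω)^2 + 2 * (g t ω)^2) ∂μ
        = 2 * ∫ ω, (Y t ω)^2 ∂μ + 2 * ∫ ω, (g t ω)^2 ∂μ := by
      rw [integral_add ((hmom t).1.const_mul 2) (hg2int.const_mul 2),
        integral_const_mul, integral_const_mul]
    have h3 : ∫ ω, (g t ω)^2 ∂μ ≤ (hi t)^2 := by
      have : ∫ ω, (g t ω)^2 ∂μ ≤ ∫ _ω, (hi t)^2 ∂μ := by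
        apply integral_mono_ae hg2int (integrable_const _)
        filter_upwards [hgbd t] with ω hω
        nlinarith [abs_nonneg (g t ω), sq_abs (g t ω)]
      simpa using this
    have h4 := (hmom t).2
    linarith
  have hd0 : ∀ t, μ[d t | F t] =ᵐ[μ] 0 := by
    intro t
    have h1 : μ[d t | F t] =ᵐ[μ] μ[X (t+1) | F t] - μ[μ[X (t+1) | F t] | F t] :=
      condExp_sub (hXint (t+1)) integrable_condExp _
    have h2 : μ[μ[X (t+1) | F t] | F t] =ᵐ[μ] μ[X (t+1) | F t] :=
      condExp_condExp_of_le le_rfl (F.le t)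
    filter_upwards [h1, h2] with ω hω1 hω2
    simp only [Pi.sub_apply, Pi.zero_apply] at *
    rw [hω1, hω2]; ring
  have hdSM : ∀ t, StronglyMeasurable[F (t+1)] (d t) := fun t =>
    (((hadapt (t+1))).sub (stronglyMeasurable_condExp.mono (F.mono (Nat.le_succ t))))
  have horth : ∀ t u : ℕ, t < u → ∫ ω, d t ω * d u ω ∂μ = 0 := by
    intro t u htu
    have hSMu : StronglyMeasurable[F u] (d t) := (hdSM t).mono (F.mono htu)
    have hprod : Integrable (d t * d u) μ := integrable_mul_of_sq (hdmeas t).aestronglyMeasurable (hdmeas u).aestronglyMeasurable (hdint2 t) (hdint2 u)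
    have hdu_int : Integrable (d u) μ := (hdmem u).integrable one_le_two
    have h1 : μ[d t * d u | F u] =ᵐ[μ] d t * μ[d u | F u] :=
      condExp_mul_of_stronglyMeasurable_left hSMu hprod hdu_int
    have h2 : μ[d t * d u | F u] =ᵐ[μ] 0 := by
      filter_upwards [h1, hd0 u] with ω hω1 hω2
      simp only [Pi.mul_apply, Pi.zero_apply] at *
      rw [hω1, hω2, mul_zero]
    calc ∫ ω, d t ω * d u ω ∂μ = ∫ ω, (d t * d u) ω ∂μ := rfl
    _ = ∫ ω, (μ[d t * d u | F u]) ω ∂μ := (integral_condExp (F.le u)).symm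
    _ = ∫ ω, (0 : Ω → ℝ) ω ∂μ := integral_congr_ae h2
    _ = 0 := by simp
  refine ⟨fun T ω => ∑ t ∈ Finset.range T, d t ω, fun T ω => ∑ t ∈ Finset.range T, g t ω,
    ?_, ?_, ?_, ?_, ?_, ?_⟩
  · exact fun T => Finset.measurable_sum _ (fun t _ => hdmeas t)
  · exact hXmem
  · intro T
    have : (fun ω => (∑ t ∈ Finset.range T, d t ω)^2)
        = fun ω => ∑ t ∈ Finset.range T, ∑ u ∈ Finset.range T, d t ω * d u ω := by
      funext ω; rw [sq, Finset.sum_mul_sum]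
    rw [this]
    apply integrable_finset_sum
    intro t _
    apply integrable_finset_sum
    intro u _
    exact integrable_mul_of_sq (hdmeas t).aestronglyMeasurable (hdmeas u).aestronglyMeasurable (hdint2 t) (hdint2 u)
  · intro T
    have hsq : (fun ω => (∑ t ∈ Finset.range T, d t ω)^2)
        = fun ω => ∑ t ∈ Finset.range T, ∑ u ∈ Finset.range T, d t ω * d u ω := by
      funext ω; rw [sq, Finset.sum_mul_sum]
    have hmul : ∀ t u : ℕ, Integrable (fun ω => d t ω * d u ω) μ := fun t u =>
      integrable_mul_of_sq (hdmeas t).aestronglyMeasurable (hdmeas u).aestronglyMeasurable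
        (hdint2 t) (hdint2 u)
    have hI : ∫ ω, (∑ t ∈ Finset.range T, d t ω)^2 ∂μ
        = ∑ t ∈ Finset.range T, ∑ u ∈ Finset.range T, ∫ ω, d t ω * d u ω ∂μ := by
      calc ∫ ω, (∑ t ∈ Finset.range T, d t ω)^2 ∂μ
          = ∫ ω, ∑ t ∈ Finset.range T, (∑ u ∈ Finset.range T, d t ω * d u ω) ∂μ := by rw [hsq]
      _ = ∑ t ∈ Finset.range T, ∫ ω, (∑ u ∈ Finset.range T, d t ω * d u ω) ∂μ :=
          integral_finset_sum _ (fun t _ => integrable_finset_sum _ (fun u _ => hmul t u))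
      _ = ∑ t ∈ Finset.range T, ∑ u ∈ Finset.range T, ∫ ω, d t ω * d u ω ∂μ :=
          Finset.sum_congr rfl (fun t _ => integral_finset_sum _ (fun u _ => hmul t u))
    have hdiag : ∀ t ∈ Finset.range T,
        ∑ u ∈ Finset.range T, ∫ ω, d t ω * d u ω ∂μ = ∫ ω, (d t ω)^2 ∂μ := by
      intro t ht
      rw [Finset.sum_eq_single_of_mem t ht]
      · congr 1; funext ω; rw [sq]
      · intro u _ hut
        rcases lt_or_gt_of_ne hut with h | h
        · rw [show (fun ω => d t ω * d u ω) = fun ω => d u ω * d t ω by funext ω; ring]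
          exact horth u t h
        · exact horth t u h
    rw [hI, Finset.sum_congr rfl hdiag]
    exact Finset.sum_le_sum (fun t _ => hd2bd t)
  · intro T ω
    have htel : ∑ t ∈ Finset.range T, (X (t+1) ω - X t ω) = X T ω - X 0 ω :=
      Finset.sum_range_sub (fun t => X t ω) T
    have : ∑ t ∈ Finset.range T, d t ω + ∑ t ∈ Finset.range T, g t ω
        = ∑ t ∈ Finset.range T, (X (t+1) ω - X t ω) := by
      rw [← Finset.sum_add_distrib]
      exact Finset.sum_congr rfl (fun t _ => by simp only [hddef, hgdef]; ring)
    rw [htel] at this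
    linarith
  · have hae : ∀ᵐ ω ∂μ, ∀ t : ℕ, lo t ≤ g t ω ∧ g t ω ≤ hi t := by
      rw [ae_all_iff]; exact hbias
    filter_upwards [hae] with ω hω T
    exact ⟨Finset.sum_le_sum (fun t _ => (hω t).1), Finset.sum_le_sum (fun t _ => (hω t).2)⟩

lemma second_moment_markov {Ω : Type} [MeasurableSpace Ω] (μ : Measure Ω) [IsProbabilityMeasure μ]
    (X' M : Ω → ℝ)
    (hX'int2 : Integrable (fun ω => X' ω^2) μ)
    (hMint2 : Integrable (fun ω => (M ω)^2) μ)
    (hdiffint2 : Integrable (fun ω => (X' ω - M ω)^2) μ)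
    (Vb D ε : ℝ) (hε : 0 < ε)
    (hMvar : ∫ ω, (M ω)^2 ∂μ ≤ Vb)
    (hdiffbd : ∀ᵐ ω ∂μ, (X' ω - M ω)^2 ≤ D^2) :
    (μ {ω | ε ≤ |X' ω|}).toReal ≤ (2*Vb + 2*D^2)/ε^2 := by
  have hintX : ∫ ω, X' ω^2 ∂μ ≤ 2*Vb + 2*D^2 := by
    have hsq : ∀ ω, X' ω^2 ≤ 2*(M ω)^2 + 2*(X' ω - M ω)^2 := fun ω => by
      nlinarith [sq_nonneg (M ω - (X' ω - M ω))]
    calc ∫ ω, X' ω^2 ∂μ ≤ ∫ ω, (2*(M ω)^2 + 2*(X' ω - M ω)^2) ∂μ :=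
        integral_mono hX'int2 ((hMint2.const_mul 2).add (hdiffint2.const_mul 2)) hsq
    _ = 2*∫ ω, (M ω)^2 ∂μ + 2*∫ ω, (X' ω - M ω)^2 ∂μ := by
        rw [integral_add (hMint2.const_mul 2) (hdiffint2.const_mul 2),
          integral_const_mul, integral_const_mul]
    _ ≤ 2*Vb + 2*D^2 := by
        have h5 : ∫ ω, (X' ω - M ω)^2 ∂μ ≤ D^2 :=
          le_trans (integral_mono_ae hdiffint2 (integrable_const _) hdiffbd) (by simp)
        linarith
  refine le_trans (cheby μ X' hX'int2 ε hε) ?_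
  gcongr

set_option maxHeartbeats 1000000 in
/-- For recursive estimation processes `(θ̂_t^{(n)})` with `θ̂_0^{(n)} = θ*`,
per-step conditional tail bound with rate `r(m) = m^κ`, `κ ≥ γ/2`, schedule `c_t = t^{1+s}`,
and conditional bias of order `ρ` with `κ/γ ≤ ρ < 1`
(`b₁ v_i n_{t−1}^{−ρ} ≤ E[θ̂_{t,i}|F_{t−1}] − θ̂_{t−1,i} ≤ b₂ v_i n_{t−1}^{−ρ}` a.s., with
`v_i > 0` for some coordinate), for every `δ > 0`:
(a) if `s > 1/ρ − 1` then `lim_{n→∞} limsup_{T→∞} P(‖θ̂_T^{(n)} − θ*‖₂ ≥ δ) = 0`;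
(b) if `0 < s < 1/ρ − 1` then for every fixed `n ≥ 1`,
`lim_{T→∞} P(‖θ̂_T^{(n)} − θ*‖₂ ≥ δ) = 1`. -/
theorem stmt_8
    {Ω : Type} [mΩ : MeasurableSpace Ω] (μ : Measure Ω) [IsProbabilityMeasure μ]
    (p : ℕ) (hp : 1 ≤ p) (θstar : Fin p → ℝ)
    (C₁ C₂ γ κ s ρ b₁ b₂ : ℝ) (hC₁ : 0 < C₁) (hC₂ : 0 < C₂) (hγ : 0 < γ)
    (hκγ : γ / 2 ≤ κ) (hs : 0 < s) (hρl : κ / γ ≤ ρ) (hρu : ρ < 1)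
    (hb₁ : 0 < b₁) (hb₁₂ : b₁ ≤ b₂)
    (v : Fin p → ℝ) (hv : ∀ i, 0 ≤ v i) (hvpos : ∃ i, 0 < v i)
    (c : ℕ → ℝ) (hc0 : c 0 = 1) (hc : ∀ t : ℕ, 1 ≤ t → c t = (t : ℝ) ^ ((1 : ℝ) + s))
    (F : ℕ → Filtration ℕ mΩ)
    (θhat : ℕ → ℕ → Ω → (Fin p → ℝ))
    (hadapt : ∀ n, Adapted (F n) (θhat n))
    (h0 : ∀ n, ∀ᵐ ω ∂μ, θhat n 0 ω = θstar)
    (htail : ∀ n : ℕ, 1 ≤ n → ∀ t : ℕ, 1 ≤ t → ∀ δ' : ℝ, 0 < δ' →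
      ∀ᵐ ω ∂μ,
        (μ[Set.indicator {ω' | δ' < l2norm (θhat n t ω' - θhat n (t - 1) ω')}
            (fun _ => (1 : ℝ)) | (F n) (t - 1)]) ω
          ≤ C₁ * Real.exp (-C₂ * (c (t - 1) * n) ^ κ * δ' ^ γ))
    (hbias : ∀ n : ℕ, 1 ≤ n → ∀ t : ℕ, 1 ≤ t → ∀ i : Fin p,
      ∀ᵐ ω ∂μ,
        b₁ * v i * (c (t - 1) * n) ^ (-ρ)
            ≤ (μ[(fun ω' => θhat n t ω' i) | (F n) (t - 1)]) ω - θhat n (t - 1) ω i ∧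
        (μ[(fun ω' => θhat n t ω' i) | (F n) (t - 1)]) ω - θhat n (t - 1) ω i
            ≤ b₂ * v i * (c (t - 1) * n) ^ (-ρ)) :
    ∀ δ : ℝ, 0 < δ →
      (1 / ρ - 1 < s →
        Tendsto (fun n : ℕ =>
            limsup (fun T : ℕ => (μ {ω | δ ≤ l2norm (θhat n T ω - θstar)}).toReal) atTop)
          atTop (nhds 0)) ∧
      (s < 1 / ρ - 1 → ∀ n : ℕ, 1 ≤ n →
        Tendsto (fun T : ℕ => (μ {ω | δ ≤ l2norm (θhat n T ω - θstar)}).toReal)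
          atTop (nhds 1)) := by
  classical
  intro δ hδ
  -- basic positivity facts
  have hκ : 0 < κ := lt_of_lt_of_le (by linarith) hκγ
  have hρ0 : 0 < ρ := lt_of_lt_of_le (div_pos hκ hγ) hρl
  have h2ρ : (1:ℝ) ≤ 2*ρ := by
    have h1 : (1:ℝ)/2 ≤ κ/γ := by rw [div_le_div_iff₀ (by norm_num) hγ]; linarith
    linarith
  have he₂1 : (1:ℝ) ≤ 2*(κ/γ) := by
    have h1 : (1:ℝ)/2 ≤ κ/γ := by rw [div_le_div_iff₀ (by norm_num) hγ]; linarith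
    linarith
  have he₂0 : (0:ℝ) < 2*(κ/γ) := by positivity
  have hb₂0 : 0 < b₂ := lt_of_lt_of_le hb₁ hb₁₂
  have hp0 : (0:ℝ) < p := by exact_mod_cast hp
  have hc1 : ∀ t : ℕ, 1 ≤ c t := c_one_le s hs c hc0 hc
  have hcn1 : ∀ n : ℕ, 1 ≤ n → ∀ t : ℕ, (1:ℝ) ≤ c t * n := by
    intro n hn t
    have h1 : (1:ℝ) ≤ (n:ℝ) := by exact_mod_cast hn
    nlinarith [hc1 t]
  -- measurability
  have hmi : ∀ n t (i : Fin p), Measurable (fun ω => θhat n t ω i) := fun n t i =>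
    (measurable_pi_apply i).comp ((hadapt n t).mono ((F n).le t) le_rfl)
  have hl2meas : ∀ n t : ℕ, Measurable (fun ω => l2norm (θhat n (t+1) ω - θhat n t ω)) := by
    intro n t
    show Measurable fun ω => Real.sqrt (∑ i, ((θhat n (t+1) ω - θhat n t ω) i)^2)
    apply Measurable.sqrt
    apply Finset.measurable_sum
    intro i _
    exact ((hmi n (t+1) i).sub (hmi n t i)).pow_const 2
  -- unconditional multivariate tail bound
  have htailU : ∀ n : ℕ, 1 ≤ n → ∀ t : ℕ, ∀ u : ℝ, 0 < u →
      (μ {ω | u < l2norm (θhat n (t+1) ω - θhat n t ω)}).toReal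
        ≤ C₁ * Real.exp (-(C₂ * (c t * n) ^ κ * u ^ γ)) := by
    intro n hn t u hu
    have hA : MeasurableSet {ω | u < l2norm (θhat n (t+1) ω - θhat n t ω)} :=
      measurableSet_lt measurable_const (hl2meas n t)
    have hcond := htail n hn (t+1) (by omega) u hu
    simp only [Nat.add_sub_cancel] at hcond
    have heq : -C₂ * (c t * n) ^ κ * u ^ γ = -(C₂ * (c t * n) ^ κ * u ^ γ) := by ring
    calc (μ {ω | u < l2norm (θhat n (t+1) ω - θhat n t ω)}).toReal
        = ∫ ω, Set.indicator {ω' | u < l2norm (θhat n (t+1) ω' - θhat n t ω')}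
            (fun _ => (1:ℝ)) ω ∂μ := (integral_indicator_one hA).symm
    _ = ∫ ω, (μ[Set.indicator {ω' | u < l2norm (θhat n (t+1) ω' - θhat n t ω')}
            (fun _ => (1:ℝ)) | (F n) t]) ω ∂μ := (integral_condExp ((F n).le t)).symm
    _ ≤ ∫ _ω, C₁ * Real.exp (-C₂ * (c t * n) ^ κ * u ^ γ) ∂μ :=
        integral_mono_ae integrable_condExp (integrable_const _) hcond
    _ = C₁ * Real.exp (-(C₂ * (c t * n) ^ κ * u ^ γ)) := by
        rw [integral_const]; simp [heq]
  -- coordinatewise unconditional tail bound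
  have htailC : ∀ n : ℕ, 1 ≤ n → ∀ (i : Fin p) (t : ℕ), ∀ u : ℝ, 0 < u →
      (μ {ω | u < |θhat n (t+1) ω i - θhat n t ω i|}).toReal
        ≤ C₁ * Real.exp (-(C₂ * (c t * n) ^ κ * u ^ γ)) := by
    intro n hn i t u hu
    refine le_trans ?_ (htailU n hn t u hu)
    apply ENNReal.toReal_mono (measure_ne_top μ _)
    apply measure_mono
    intro ω hω
    simp only [Set.mem_setOf_eq] at *
    have h1 : |(θhat n (t+1) ω - θhat n t ω) i| ≤ l2norm (θhat n (t+1) ω - θhat n t ω) :=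
      abs_apply_le_l2norm _ i
    simp only [Pi.sub_apply] at h1
    linarith
  -- abbreviations
  set S : ℝ := ∑' k:ℕ, (2*(k:ℝ)+3) * Real.exp (-((k:ℝ)+1)^γ) with hSdef
  have hS0 : 0 ≤ S := tsum_nonneg (fun k => by positivity)
  set K₀ : ℝ := 1 + C₁ * S with hK₀def
  have hK₀0 : 0 < K₀ := by positivity
  set Zf : ℝ → ℝ := fun e => 1 + ∑' j:ℕ, ((j:ℝ)+1)^(-((1+s)*e)) with hZfdef
  have hZf0 : ∀ e, 0 < Zf e := by
    intro e
    have : 0 ≤ ∑' j:ℕ, ((j:ℝ)+1)^(-((1+s)*e)) :=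
      tsum_nonneg (fun j => Real.rpow_nonneg (by positivity) _)
    simp only [hZfdef]
    linarith
  set V : ℕ → Fin p → ℝ := fun n i =>
    2*K₀*C₂^(-(2/γ))*Zf (2*(κ/γ)) * (n:ℝ)^(-(2*(κ/γ)))
      + 2*(b₂*v i)^2* Zf (2*ρ) * (n:ℝ)^(-(2*ρ)) with hVdef
  -- main structural decomposition
  have hmain : ∀ n : ℕ, 1 ≤ n → ∀ i : Fin p, ∃ M G : ℕ → Ω → ℝ,
      (∀ T, Measurable (M T)) ∧
      (∀ T, MemLp (fun ω => θhat n T ω i) 2 μ) ∧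
      (∀ T, Integrable (fun ω => (M T ω)^2) μ) ∧
      (∀ T, ∫ ω, (M T ω)^2 ∂μ ≤ V n i) ∧
      (∀ T ω, θhat n T ω i = θhat n 0 ω i + M T ω + G T ω) ∧
      (∀ᵐ ω ∂μ, ∀ T, (∑ t ∈ Finset.range T, b₁ * v i * (c t * n)^(-ρ)) ≤ G T ω ∧
          G T ω ≤ ∑ t ∈ Finset.range T, b₂ * v i * (c t * n)^(-ρ)) := by
    intro n hn i
    have hX0 : MemLp (fun ω => θhat n 0 ω i) 2 μ := by
      refine MemLp.ae_eq ?_ (memLp_const (θstar i))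
      filter_upwards [h0 n] with ω hω
      rw [hω]
    have hbias' : ∀ t : ℕ, ∀ᵐ ω ∂μ,
        b₁ * v i * (c t * n)^(-ρ)
            ≤ (μ[(fun ω' => θhat n (t+1) ω' i) | (F n) t]) ω - θhat n t ω i ∧
        (μ[(fun ω' => θhat n (t+1) ω' i) | (F n) t]) ω - θhat n t ω i
            ≤ b₂ * v i * (c t * n)^(-ρ) := by
      intro t
      have := hbias n hn (t+1) (by omega) i
      simpa only [Nat.add_sub_cancel] using this
    obtain ⟨M, G, hMmeas, hXmem, hMint2, hMvar, hdecomp, hGbd⟩ :=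
      main_aux μ (F n) (fun t ω => θhat n t ω i)
        (fun t => Measurable.stronglyMeasurable
          ((measurable_pi_apply i).comp (hadapt n t)))
        hX0 C₁ C₂ γ hC₁ hC₂ hγ
        (fun t => (c t * n)^κ)
        (fun t => Real.rpow_pos_of_pos (by nlinarith [hcn1 n hn t]) κ)
        (fun t u hu => htailC n hn i t u hu)
        (fun t => b₁ * v i * (c t * n)^(-ρ)) (fun t => b₂ * v i * (c t * n)^(-ρ))
        (fun t => mul_nonneg (mul_nonneg hb₁.le (hv i))
          (Real.rpow_nonneg (by nlinarith [hcn1 n hn t]) _))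
        (fun t => mul_nonneg (mul_nonneg hb₂0.le (hv i))
          (Real.rpow_nonneg (by nlinarith [hcn1 n hn t]) _))
        hbias'
    refine ⟨M, G, hMmeas, hXmem, hMint2, ?_, hdecomp, hGbd⟩
    intro T
    refine le_trans (hMvar T) ?_
    have hterm : ∀ t : ℕ,
        2 * (K₀ * (C₂ * (c t * n)^κ) ^ (-(2/γ))) + 2 * (b₂ * v i * (c t * n)^(-ρ))^2
        = (2*K₀*C₂^(-(2/γ))) * (c t * n)^(-(2*(κ/γ)))
          + (2*(b₂*v i)^2) * (c t * n)^(-(2*ρ)) := by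
      intro t
      have hx : (0:ℝ) < c t * n := by nlinarith [hcn1 n hn t]
      have h1 : (C₂ * (c t * n)^κ) ^ (-(2/γ))
          = C₂^(-(2/γ)) * (c t * n)^(-(2*(κ/γ))) := by
        rw [Real.mul_rpow hC₂.le (Real.rpow_nonneg hx.le κ),
          ← Real.rpow_mul hx.le]
        congr 1
        field_simp
      have h2 : ((c t * n)^(-ρ))^2 = (c t * n)^(-(2*ρ)) := by
        rw [← Real.rpow_natCast ((c t * n)^(-ρ)) 2, ← Real.rpow_mul hx.le]
        norm_num
        ring_nf
      rw [h1]
      rw [mul_pow, mul_pow, h2]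
      ring
    rw [Finset.sum_congr rfl (fun t _ => hterm t), Finset.sum_add_distrib]
    have hn1 : (1:ℝ) ≤ n := by exact_mod_cast hn
    have hcs1 := csum_le s hs c hc0 hc (2*(κ/γ)) (by nlinarith [he₂1, hs]) (n:ℝ) hn1 T
    have hcs2 := csum_le s hs c hc0 hc (2*ρ) (by nlinarith [h2ρ, hs]) (n:ℝ) hn1 T
    rw [hVdef]
    simp only []
    rw [← Finset.mul_sum, ← Finset.mul_sum]
    have hle1 : (2*K₀*C₂^(-(2/γ))) * (∑ t ∈ Finset.range T, (c t * n)^(-(2*(κ/γ))))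
        ≤ 2*K₀*C₂^(-(2/γ))*Zf (2*(κ/γ)) * (n:ℝ)^(-(2*(κ/γ))) := by
      have hpos : (0:ℝ) ≤ 2*K₀*C₂^(-(2/γ)) := by positivity
      calc (2*K₀*C₂^(-(2/γ))) * (∑ t ∈ Finset.range T, (c t * n)^(-(2*(κ/γ))))
          ≤ (2*K₀*C₂^(-(2/γ))) * (Zf (2*(κ/γ)) * (n:ℝ)^(-(2*(κ/γ)))) :=
            mul_le_mul_of_nonneg_left hcs1 hpos
      _ = 2*K₀*C₂^(-(2/γ))*Zf (2*(κ/γ)) * (n:ℝ)^(-(2*(κ/γ))) := by ring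
    have hle2 : (2*(b₂*v i)^2) * (∑ t ∈ Finset.range T, (c t * n)^(-(2*ρ)))
        ≤ 2*(b₂*v i)^2* Zf (2*ρ) * (n:ℝ)^(-(2*ρ)) := by
      have hpos : (0:ℝ) ≤ 2*(b₂*v i)^2 := by positivity
      calc (2*(b₂*v i)^2) * (∑ t ∈ Finset.range T, (c t * n)^(-(2*ρ)))
          ≤ (2*(b₂*v i)^2) * (Zf (2*ρ) * (n:ℝ)^(-(2*ρ))) :=
            mul_le_mul_of_nonneg_left hcs2 hpos
      _ = 2*(b₂*v i)^2* Zf (2*ρ) * (n:ℝ)^(-(2*ρ)) := by ring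
    exact add_le_add hle1 hle2
  constructor
  · -- Part (a)
    intro hsa
    have h1ρs : 1 < (1+s)*ρ := by
      have h1 : 1/ρ < 1 + s := by linarith
      have h2 := mul_lt_mul_of_pos_right h1 hρ0
      rwa [one_div, inv_mul_cancel₀ hρ0.ne'] at h2
    have hr : ∀ e : ℝ, 0 < e → Tendsto (fun n : ℕ => ((n:ℝ))^(-e)) atTop (nhds 0) :=
      fun e he => (tendsto_rpow_neg_atTop he).comp tendsto_natCast_atTop_atTop
    -- coordinatewise Chebyshev bound
    have hXbound : ∀ n : ℕ, 1 ≤ n → ∀ i : Fin p, ∀ T : ℕ,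
        (μ {ω | δ/(p:ℝ) ≤ |θhat n T ω i - θstar i|}).toReal
          ≤ (2*(V n i) + 2*(b₂*v i*Zf ρ*(n:ℝ)^(-ρ))^2)/(δ/(p:ℝ))^2 := by
      intro n hn i T
      obtain ⟨M, G, hMmeas, hXmem, hMint2, hMvar, hdecomp, hGbd⟩ := hmain n hn i
      have hMmem : MemLp (M T) 2 μ :=
        (memLp_two_iff_integrable_sq (hMmeas T).aestronglyMeasurable).mpr (hMint2 T)
      have hX'mem : MemLp (fun ω => θhat n T ω i - θstar i) 2 μ :=
        (hXmem T).sub (memLp_const _)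
      refine second_moment_markov μ (fun ω => θhat n T ω i - θstar i) (M T)
        hX'mem.integrable_sq (hMint2 T) ((hX'mem.sub hMmem).integrable_sq)
        (V n i) (b₂*v i*Zf ρ*(n:ℝ)^(-ρ)) (δ/(p:ℝ)) (by positivity) (hMvar T) ?_
      have hsumhi : ∑ t ∈ Finset.range T, b₂ * v i * (c t * n)^(-ρ)
          ≤ b₂*v i*Zf ρ*(n:ℝ)^(-ρ) := by
        rw [← Finset.mul_sum]
        have h2 := csum_le s hs c hc0 hc ρ h1ρs (n:ℝ) (by exact_mod_cast hn) T
        have h3 : (0:ℝ) ≤ b₂ * v i := mul_nonneg hb₂0.le (hv i)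
        calc (b₂ * v i) * ∑ t ∈ Finset.range T, (c t * n)^(-ρ)
            ≤ (b₂ * v i) * (Zf ρ * (n:ℝ)^(-ρ)) := mul_le_mul_of_nonneg_left h2 h3
        _ = b₂*v i*Zf ρ*(n:ℝ)^(-ρ) := by ring
      filter_upwards [h0 n, hGbd] with ω hω0 hωG
      show ((θhat n T ω i - θstar i) - M T ω)^2 ≤ (b₂*v i*Zf ρ*(n:ℝ)^(-ρ))^2
      have h2 : θhat n 0 ω i = θstar i := by rw [hω0]
      have h1 := hdecomp T ω
      have hXeq : (θhat n T ω i - θstar i) - M T ω = G T ω := by linarith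
      rw [hXeq]
      have h3 : (0:ℝ) ≤ ∑ t ∈ Finset.range T, b₁ * v i * (c t * n)^(-ρ) :=
        Finset.sum_nonneg fun t _ => mul_nonneg (mul_nonneg hb₁.le (hv i))
          (Real.rpow_nonneg (by nlinarith [hcn1 n hn t]) _)
      have h4 := (hωG T).1
      have h5 := (hωG T).2
      nlinarith
    -- union bound over coordinates
    have hunion : ∀ n : ℕ, 1 ≤ n → ∀ T : ℕ,
        (μ {ω | δ ≤ l2norm (θhat n T ω - θstar)}).toReal
          ≤ ∑ i : Fin p, (2*(V n i) + 2*(b₂*v i*Zf ρ*(n:ℝ)^(-ρ))^2)/(δ/(p:ℝ))^2 := by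
      intro n hn T
      have hne : Nonempty (Fin p) := ⟨⟨0, hp⟩⟩
      have hsub : {ω | δ ≤ l2norm (θhat n T ω - θstar)}
          ⊆ ⋃ i : Fin p, {ω | δ/(p:ℝ) ≤ |θhat n T ω i - θstar i|} := by
        intro ω hω
        simp only [Set.mem_setOf_eq] at hω
        by_contra hcon
        simp only [Set.mem_iUnion, Set.mem_setOf_eq, not_exists, not_le] at hcon
        have h1 : l2norm (θhat n T ω - θstar) ≤ ∑ i, |θhat n T ω i - θstar i| := by
          have := l2norm_le_sum_abs (θhat n T ω - θstar)
          simpa [Pi.sub_apply] using this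
        have h2 : ∑ i : Fin p, |θhat n T ω i - θstar i| < ∑ _i : Fin p, δ/(p:ℝ) :=
          Finset.sum_lt_sum_of_nonempty Finset.univ_nonempty (fun i _ => hcon i)
        rw [Finset.sum_const, Finset.card_univ, Fintype.card_fin, nsmul_eq_mul] at h2
        have h3 : (p:ℝ) * (δ/(p:ℝ)) = δ := by field_simp
        rw [h3] at h2
        linarith
      have h4 : μ {ω | δ ≤ l2norm (θhat n T ω - θstar)}
          ≤ ∑ i : Fin p, μ {ω | δ/(p:ℝ) ≤ |θhat n T ω i - θstar i|} :=
        le_trans (measure_mono hsub) (measure_iUnion_fintype_le _ _)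
      have h5 : (μ {ω | δ ≤ l2norm (θhat n T ω - θstar)}).toReal
          ≤ ∑ i : Fin p, (μ {ω | δ/(p:ℝ) ≤ |θhat n T ω i - θstar i|}).toReal := by
        refine le_trans (ENNReal.toReal_mono ?_ h4) ?_
        · exact (ENNReal.sum_lt_top.mpr (fun i _ => measure_lt_top μ _)).ne
        · rw [ENNReal.toReal_sum (fun i _ => measure_ne_top μ _)]
      refine le_trans h5 (Finset.sum_le_sum (fun i _ => hXbound n hn i T))
    -- the bounding sequence tends to zero
    have hW0 : Tendsto (fun n : ℕ =>
        ∑ i : Fin p, (2*(V n i) + 2*(b₂*v i*Zf ρ*(n:ℝ)^(-ρ))^2)/(δ/(p:ℝ))^2)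
        atTop (nhds 0) := by
      have hzero : (0:ℝ) = ∑ _i : Fin p, (0:ℝ) := by simp
      rw [hzero]
      apply tendsto_finset_sum
      intro i _
      have hVi : Tendsto (fun n : ℕ => V n i) atTop (nhds 0) := by
        have hV1 : Tendsto (fun n : ℕ =>
            2*K₀*C₂^(-(2/γ))*Zf (2*(κ/γ)) * ((n:ℝ))^(-(2*(κ/γ)))) atTop (nhds 0) := by
          have := (hr (2*(κ/γ)) he₂0).const_mul (2*K₀*C₂^(-(2/γ))*Zf (2*(κ/γ)))
          simpa using this
        have hV2 : Tendsto (fun n : ℕ =>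
            2*(b₂*v i)^2* Zf (2*ρ) * ((n:ℝ))^(-(2*ρ))) atTop (nhds 0) := by
          have := (hr (2*ρ) (by linarith)).const_mul (2*(b₂*v i)^2* Zf (2*ρ))
          simpa using this
        have := hV1.add hV2
        simpa [hVdef] using this
      have hD : Tendsto (fun n : ℕ => (b₂*v i*Zf ρ*((n:ℝ))^(-ρ))^2) atTop (nhds 0) := by
        have h1 : Tendsto (fun n : ℕ => b₂*v i*Zf ρ*((n:ℝ))^(-ρ)) atTop (nhds 0) := by
          have := (hr ρ hρ0).const_mul (b₂*v i*Zf ρ)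
          simpa using this
        have := h1.pow 2
        simpa using this
      have := ((hVi.const_mul 2).add (hD.const_mul 2)).div_const ((δ/(p:ℝ))^2)
      simpa using this
    -- squeeze the limsup
    apply tendsto_of_tendsto_of_tendsto_of_le_of_le' tendsto_const_nhds hW0
    · refine Filter.Eventually.of_forall (fun n => ?_)
      have hbdd : IsBoundedUnder (· ≤ ·) atTop
          (fun T : ℕ => (μ {ω | δ ≤ l2norm (θhat n T ω - θstar)}).toReal) := by
        refine isBoundedUnder_of ⟨1, fun T => ?_⟩
        have h1 : μ {ω | δ ≤ l2norm (θhat n T ω - θstar)} ≤ 1 := prob_le_one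
        have := ENNReal.toReal_mono (by simp) h1
        simpa using this
      exact le_limsup_of_frequently_le
        (Filter.Frequently.of_forall (fun T => ENNReal.toReal_nonneg)) hbdd
    · filter_upwards [Filter.eventually_ge_atTop 1] with n hn
      have hcobdd : IsCoboundedUnder (· ≤ ·) atTop
          (fun T : ℕ => (μ {ω | δ ≤ l2norm (θhat n T ω - θstar)}).toReal) :=
        (isBoundedUnder_of ⟨0, fun T => ENNReal.toReal_nonneg⟩ :
          IsBoundedUnder (· ≥ ·) atTop _).isCoboundedUnder_le
      exact limsup_le_of_le hcobdd (Filter.Eventually.of_forall (hunion n hn))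
  · -- Part (b)
    intro hsb n hn
    obtain ⟨i, hvi⟩ := hvpos
    obtain ⟨M, G, hMmeas, hXmem, hMint2, hMvar, hdecomp, hGbd⟩ := hmain n hn i
    have h1ρs' : (1+s)*ρ ≤ 1 := by
      have h1 : 1 + s < 1/ρ := by linarith
      have h2 := mul_lt_mul_of_pos_right h1 hρ0
      rw [one_div, inv_mul_cancel₀ hρ0.ne'] at h2
      linarith
    have hdiv := csum_diverge s ρ hs h1ρs' c hc0 hc
    have hn1 : (1:ℝ) ≤ (n:ℝ) := by exact_mod_cast hn
    have hnρpos : 0 < b₁ * v i * (n:ℝ)^(-ρ) :=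
      mul_pos (mul_pos hb₁ hvi) (Real.rpow_pos_of_pos (by linarith) _)
    have hLtend : Tendsto (fun T : ℕ =>
        b₁ * v i * (n:ℝ)^(-ρ) * (∑ t ∈ Finset.range T, (c t)^(-ρ))) atTop atTop :=
      Tendsto.const_mul_atTop hnρpos hdiv
    have hLeq : ∀ T : ℕ, ∑ t ∈ Finset.range T, b₁ * v i * (c t * n)^(-ρ)
        = b₁ * v i * (n:ℝ)^(-ρ) * (∑ t ∈ Finset.range T, (c t)^(-ρ)) := by
      intro T
      rw [Finset.mul_sum]
      apply Finset.sum_congr rfl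
      intro t _
      rw [Real.mul_rpow (le_trans zero_le_one (hc1 t)) (by linarith : (0:ℝ) ≤ (n:ℝ))]
      ring
    have herr : Tendsto (fun T : ℕ =>
        V n i / (b₁ * v i * (n:ℝ)^(-ρ) * (∑ t ∈ Finset.range T, (c t)^(-ρ)) - δ)^2)
        atTop (nhds 0) := by
      apply Tendsto.div_atTop tendsto_const_nhds
      have h1 : Tendsto (fun T : ℕ =>
          b₁ * v i * (n:ℝ)^(-ρ) * (∑ t ∈ Finset.range T, (c t)^(-ρ)) - δ) atTop atTop :=
        tendsto_atTop_add_const_right _ _ hLtend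
      have h2 := Tendsto.atTop_mul_atTop₀ h1 h1
      exact Tendsto.congr (fun T => (sq _).symm) h2
    have hup : ∀ T : ℕ, (μ {ω | δ ≤ l2norm (θhat n T ω - θstar)}).toReal ≤ 1 := by
      intro T
      have h1 : μ {ω | δ ≤ l2norm (θhat n T ω - θstar)} ≤ 1 := prob_le_one
      have := ENNReal.toReal_mono (by simp) h1
      simpa using this
    have hlow : ∀ᶠ T in atTop,
        1 - V n i / (b₁ * v i * (n:ℝ)^(-ρ) * (∑ t ∈ Finset.range T, (c t)^(-ρ)) - δ)^2
          ≤ (μ {ω | δ ≤ l2norm (θhat n T ω - θstar)}).toReal := by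
      filter_upwards [hLtend.eventually_ge_atTop (δ+1)] with T hLT
      set LT : ℝ := b₁ * v i * (n:ℝ)^(-ρ) * (∑ t ∈ Finset.range T, (c t)^(-ρ)) with hLTdef
      have hAmeas : MeasurableSet {ω | δ ≤ |θhat n T ω i - θstar i|} :=
        measurableSet_le measurable_const ((hmi n T i).sub measurable_const).abs
      have hsub : {ω | δ ≤ |θhat n T ω i - θstar i|}
          ⊆ {ω | δ ≤ l2norm (θhat n T ω - θstar)} := by
        intro ω hω
        simp only [Set.mem_setOf_eq] at *
        have h1 := abs_apply_le_l2norm (θhat n T ω - θstar) i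
        simp only [Pi.sub_apply] at h1
        linarith
      have hcompl : (μ {ω | δ ≤ |θhat n T ω i - θstar i|}ᶜ).toReal
          ≤ V n i / (LT - δ)^2 := by
        have hae : ∀ᵐ ω ∂μ, ω ∈ {ω | δ ≤ |θhat n T ω i - θstar i|}ᶜ
            → ω ∈ {ω | LT - δ ≤ |M T ω|} := by
          filter_upwards [h0 n, hGbd] with ω hω0 hωG hmem
          simp only [Set.mem_compl_iff, Set.mem_setOf_eq, not_le] at hmem
          show LT - δ ≤ |M T ω|
          have h2 : θhat n 0 ω i = θstar i := by rw [hω0]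
          have h1 := hdecomp T ω
          have h3 := (hωG T).1
          rw [hLeq T, ← hLTdef] at h3
          have h5 : θhat n T ω i - θstar i < δ := lt_of_le_of_lt (le_abs_self _) hmem
          have h6 : M T ω ≤ δ - LT := by linarith
          have h7 : LT - δ ≤ -(M T ω) := by linarith
          linarith [neg_le_abs (M T ω)]
        have h7 : μ {ω | δ ≤ |θhat n T ω i - θstar i|}ᶜ ≤ μ {ω | LT - δ ≤ |M T ω|} :=
          measure_mono_ae hae
        refine le_trans (ENNReal.toReal_mono (measure_ne_top μ _) h7) ?_
        refine le_trans (cheby μ (M T) (hMint2 T) (LT - δ) (by linarith)) ?_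
        gcongr
        exact hMvar T
      have h8 : 1 - V n i / (LT - δ)^2 ≤ (μ {ω | δ ≤ |θhat n T ω i - θstar i|}).toReal := by
        have h9 : (μ {ω | δ ≤ |θhat n T ω i - θstar i|}).toReal
            + (μ {ω | δ ≤ |θhat n T ω i - θstar i|}ᶜ).toReal = 1 := by
          rw [← ENNReal.toReal_add (measure_ne_top μ _) (measure_ne_top μ _),
            measure_add_measure_compl hAmeas, measure_univ]
          simp
        linarith
      exact le_trans h8 (ENNReal.toReal_mono (measure_ne_top μ _) (measure_mono hsub))
    have hlim : Tendsto (fun T : ℕ =>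
        1 - V n i / (b₁ * v i * (n:ℝ)^(-ρ) * (∑ t ∈ Finset.range T, (c t)^(-ρ)) - δ)^2)
        atTop (nhds 1) := by
      have hone : Tendsto (fun _ : ℕ => (1:ℝ)) atTop (nhds 1) := tendsto_const_nhds
      have := hone.sub herr
      simpa using this
    exact tendsto_of_tendsto_of_tendsto_of_le_of_le' hlim tendsto_const_nhds hlow
      (Filter.Eventually.of_forall hup)
end

section
/- Let Z_1, …, Z_T be independent centered Gaussian vectors in ℝ^p with Z_i ~ N(0, Σ_i), where Σ_1 is positive definite and ∑_{i=2}^T Σ_i is positive definite. Set S_T = Z_1 + ⋯ + Z_T and V_T = Z_2 + ⋯ + Z_T. Then P(‖Z_1‖₂ > ‖S_T‖₂) = E_{V_T}[ Φ( −‖V_T‖₂ / (2·‖Σ_1^{1/2}·(V_T/‖V_T‖₂)‖₂) ) ]. -/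
open MeasureTheory ProbabilityTheory Filter

/-- The standard normal cumulative distribution function `Φ`. -/
noncomputable def Phi (x : ℝ) : ℝ :=
  ∫ t in Set.Iic x, (Real.sqrt (2 * Real.pi))⁻¹ * Real.exp (-(t ^ 2) / 2)

/-- The standard Gaussian measure on `ℝ^p`. -/
noncomputable def stdGaussianPi (p : ℕ) : Measure (Fin p → ℝ) :=
  Measure.pi fun _ => gaussianReal 0 1

/-- The matrix square root of a positive semidefinite matrix, as `Matrix.PosSemidef.sqrt`
was defined in the older Mathlib (removed since). -/
noncomputable def Matrix.PosSemidef.sqrt {n : Type*} [Fintype n] [DecidableEq n]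
    {A : Matrix n n ℝ} (hA : A.PosSemidef) : Matrix n n ℝ :=
  hA.1.eigenvectorUnitary.1 * Matrix.diagonal ((↑) ∘ (hA.1.eigenvalues · |>.sqrt)) *
    (star hA.1.eigenvectorUnitary : Matrix n n ℝ)

/-- The centered Gaussian measure on `ℝ^p` with covariance matrix `S`, realized as the
pushforward of the standard Gaussian under `x ↦ S^{1/2} x`. -/
noncomputable def gaussianCov {p : ℕ} (S : Matrix (Fin p) (Fin p) ℝ) (hS : S.PosSemidef) :
    Measure (Fin p → ℝ) :=
  Measure.map (fun x => hS.sqrt.mulVec x) (stdGaussianPi p)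


lemma Matrix.PosSemidef.posSemidef_sqrt {n : Type*} [Fintype n] [DecidableEq n]
    {A : Matrix n n ℝ} (hA : A.PosSemidef) : hA.sqrt.PosSemidef := by
  unfold Matrix.PosSemidef.sqrt
  have hD : (Matrix.diagonal ((↑) ∘ (hA.1.eigenvalues · |>.sqrt)) : Matrix n n ℝ).PosSemidef :=
    Matrix.PosSemidef.diagonal (fun i => by simp [Real.sqrt_nonneg])
  have := hD.mul_mul_conjTranspose_same (hA.1.eigenvectorUnitary : Matrix n n ℝ)
  simpa [Matrix.star_eq_conjTranspose] using this

lemma Matrix.PosSemidef.sqrt_mul_self {n : Type*} [Fintype n] [DecidableEq n]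
    {A : Matrix n n ℝ} (hA : A.PosSemidef) : hA.sqrt * hA.sqrt = A := by
  unfold Matrix.PosSemidef.sqrt
  conv_rhs => rw [hA.1.spectral_theorem]
  rw [Unitary.conjStarAlgAut_apply]
  have hU : (star hA.1.eigenvectorUnitary : Matrix n n ℝ) *
      (hA.1.eigenvectorUnitary : Matrix n n ℝ) = 1 :=
    Unitary.coe_star_mul_self _
  have hd : (Matrix.diagonal ((↑) ∘ (hA.1.eigenvalues · |>.sqrt)) : Matrix n n ℝ) *
      Matrix.diagonal ((↑) ∘ (hA.1.eigenvalues · |>.sqrt))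
      = Matrix.diagonal (RCLike.ofReal ∘ hA.1.eigenvalues) := by
    rw [Matrix.diagonal_mul_diagonal]
    congr 1; funext i
    simp [Real.mul_self_sqrt (hA.eigenvalues_nonneg i)]
  calc _ = (hA.1.eigenvectorUnitary : Matrix n n ℝ) *
      (Matrix.diagonal ((↑) ∘ (hA.1.eigenvalues · |>.sqrt)) *
      ((star hA.1.eigenvectorUnitary : Matrix n n ℝ) * (hA.1.eigenvectorUnitary : Matrix n n ℝ)) *
      Matrix.diagonal ((↑) ∘ (hA.1.eigenvalues · |>.sqrt))) *
      (star hA.1.eigenvectorUnitary : Matrix n n ℝ) := by simp only [Matrix.mul_assoc]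
    _ = _ := by rw [hU, Matrix.mul_one, hd]

section Auxiliary
open Real Set

lemma gaussianPDFReal_conv {a b : NNReal} (ha : a ≠ 0) (hb : b ≠ 0) (z : ℝ) :
    ∫ x, gaussianPDFReal 0 a x * gaussianPDFReal 0 b (z - x) = gaussianPDFReal 0 (a + b) z := by
  set A : ℝ := (a : ℝ) with hAdef
  set B : ℝ := (b : ℝ) with hBdef
  have hA : (0:ℝ) < A := by exact_mod_cast ha.bot_lt
  have hB : (0:ℝ) < B := by exact_mod_cast hb.bot_lt
  have hπ : (0:ℝ) < π := pi_pos
  set k : ℝ := (A + B) / (2 * A * B) with hk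
  have hkpos : 0 < k := by positivity
  set d : ℝ := A * z / (A + B) with hd
  have key : ∀ x : ℝ, gaussianPDFReal 0 a x * gaussianPDFReal 0 b (z - x)
      = ((√(2 * π * A))⁻¹ * (√(2 * π * B))⁻¹ * rexp (- z^2 / (2 * (A + B))))
        * rexp (-k * (x - d)^2) := by
    intro x
    simp only [gaussianPDFReal, sub_zero]
    have h1 : rexp (- x^2 / (2 * A)) * rexp (- (z - x)^2 / (2 * B))
        = rexp (- z^2 / (2 * (A + B))) * rexp (-k * (x - d)^2) := by
      rw [← Real.exp_add, ← Real.exp_add]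
      congr 1
      rw [hk, hd]
      field_simp
      ring
    calc (√(2 * π * A))⁻¹ * rexp (- x^2 / (2 * A)) * ((√(2 * π * B))⁻¹ * rexp (- (z-x)^2 / (2 * B)))
        = (√(2 * π * A))⁻¹ * (√(2 * π * B))⁻¹ * (rexp (- x^2 / (2 * A)) * rexp (- (z-x)^2 / (2 * B))) := by ring
      _ = (√(2 * π * A))⁻¹ * (√(2 * π * B))⁻¹ * (rexp (- z^2 / (2 * (A + B))) * rexp (-k * (x - d)^2)) := by rw [h1]
      _ = _ := by ring
  rw [integral_congr_ae (Filter.Eventually.of_forall key), integral_const_mul]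
  have hint : ∫ x : ℝ, rexp (-k * (x - d)^2) = √(π / k) := by
    rw [integral_sub_right_eq_self (fun x => rexp (-k * x^2)) d]
    exact integral_gaussian k
  rw [hint]
  -- now pure algebra with square roots
  simp only [gaussianPDFReal, sub_zero]
  have hcoe : ((a + b : NNReal) : ℝ) = A + B := by push_cast; ring
  rw [hcoe]
  have h2 : (√(2 * π * A))⁻¹ * (√(2 * π * B))⁻¹ * √(π / k) = (√(2 * π * (A + B)))⁻¹ := by
    rw [← Real.sqrt_inv, ← Real.sqrt_inv, ← Real.sqrt_inv, ← Real.sqrt_mul (by positivity),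
      ← Real.sqrt_mul (by positivity)]
    congr 1
    rw [hk]
    field_simp
  calc (√(2 * π * A))⁻¹ * (√(2 * π * B))⁻¹ * rexp (- z^2 / (2 * (A+B))) * √(π / k)
      = ((√(2 * π * A))⁻¹ * (√(2 * π * B))⁻¹ * √(π / k)) * rexp (- z^2 / (2 * (A+B))) := by ring
    _ = _ := by rw [h2]

lemma gaussianPDFReal_le (v : NNReal) (x : ℝ) : gaussianPDFReal 0 v x ≤ (√(2 * π * v))⁻¹ := by
  rw [gaussianPDFReal]
  have h1 : rexp (-(x - 0)^2 / (2 * v)) ≤ 1 := by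
    rw [Real.exp_le_one_iff]
    exact div_nonpos_of_nonpos_of_nonneg (neg_nonpos.mpr (sq_nonneg _)) (by positivity)
  calc (√(2 * π * v))⁻¹ * rexp (-(x - 0)^2 / (2 * v)) ≤ (√(2 * π * v))⁻¹ * 1 := by
        apply mul_le_mul_of_nonneg_left h1 (by positivity)
    _ = _ := mul_one _

lemma integrable_conv_integrand {a b : NNReal} (z : ℝ) :
    Integrable (fun x => gaussianPDFReal 0 a x * gaussianPDFReal 0 b (z - x)) := by
  have h : Integrable (fun x => gaussianPDFReal 0 b (z - x) * gaussianPDFReal 0 a x) := by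
    refine Integrable.bdd_mul (c := (√(2 * π * b))⁻¹) (integrable_gaussianPDFReal 0 a)
      (((measurable_gaussianPDFReal 0 b).comp
        (measurable_const.sub measurable_id)).aestronglyMeasurable)
      (Filter.Eventually.of_forall fun x => ?_)
    rw [Real.norm_eq_abs, abs_of_nonneg (gaussianPDFReal_nonneg 0 b _)]
    exact gaussianPDFReal_le b _
  simpa [mul_comm] using h

lemma gaussianReal_conv (a b : NNReal) :
    Measure.map (fun q : ℝ × ℝ => q.1 + q.2) ((gaussianReal 0 a).prod (gaussianReal 0 b))
      = gaussianReal 0 (a + b) := by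
  rcases eq_or_ne a 0 with rfl | ha
  · rw [gaussianReal_zero_var, Measure.dirac_prod, Measure.map_map (by fun_prop) (by fun_prop)]
    simp [Function.comp_def]
  rcases eq_or_ne b 0 with rfl | hb
  · rw [gaussianReal_zero_var, Measure.prod_dirac, Measure.map_map (by fun_prop) (by fun_prop)]
    simp [Function.comp_def]
  have hab : a + b ≠ 0 := fun h => ha (by simpa using (add_eq_zero.mp h).1)
  refine Measure.ext_of_Iic _ _ (fun t => ?_)
  rw [Measure.map_apply (by fun_prop) measurableSet_Iic]
  rw [show (fun q : ℝ × ℝ => q.1 + q.2) ⁻¹' Iic t = {q : ℝ × ℝ | q.1 + q.2 ≤ t} from rfl,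
    Measure.prod_apply (by exact measurableSet_le (by fun_prop) measurable_const)]
  have hslice : ∀ x : ℝ, Prod.mk x ⁻¹' {q : ℝ × ℝ | q.1 + q.2 ≤ t} = Iic (t - x) := by
    intro x; ext y; simp [le_sub_iff_add_le']
  simp_rw [hslice]
  have hb' : ∀ x : ℝ, gaussianReal 0 b (Iic (t - x)) = ∫⁻ z in Iic t, gaussianPDF 0 b (z - x) := by
    intro x
    rw [gaussianReal_of_var_ne_zero 0 hb, withDensity_apply _ measurableSet_Iic]
    have hvol : Measure.map (fun z => z - x) (volume : Measure ℝ) = volume := by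
      rw [show (fun z : ℝ => z - x) = (fun z : ℝ => z + (-x)) by ext; ring]
      exact map_add_right_eq_self volume (-x)
    conv_lhs => rw [← hvol]
    rw [setLIntegral_map measurableSet_Iic (measurable_gaussianPDF 0 b) (by fun_prop)]
    congr 1
    ext z
    simp [sub_le_iff_le_add, le_sub_iff_add_le]
  simp_rw [hb']
  have hmeasg : Measurable (fun x : ℝ => ∫⁻ z in Iic t, gaussianPDF 0 b (z - x)) := by
    have : Measurable (fun q : ℝ × ℝ => gaussianPDF 0 b (q.2 - q.1)) :=
      (measurable_gaussianPDF 0 b).comp (measurable_snd.sub measurable_fst)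
    exact this.lintegral_prod_right'
  rw [gaussianReal_of_var_ne_zero 0 ha,
    lintegral_withDensity_eq_lintegral_mul _ (measurable_gaussianPDF 0 a) hmeasg]
  simp only [Pi.mul_apply]
  have hmeas2 : Measurable (fun q : ℝ × ℝ => gaussianPDF 0 a q.1 * gaussianPDF 0 b (q.2 - q.1)) :=
    ((measurable_gaussianPDF 0 a).comp measurable_fst).mul
      ((measurable_gaussianPDF 0 b).comp (measurable_snd.sub measurable_fst))
  calc ∫⁻ x, gaussianPDF 0 a x * ∫⁻ z in Iic t, gaussianPDF 0 b (z - x)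
      = ∫⁻ x, ∫⁻ z in Iic t, gaussianPDF 0 a x * gaussianPDF 0 b (z - x) := by
        refine lintegral_congr fun x => ?_
        exact (lintegral_const_mul _ ((measurable_gaussianPDF 0 b).comp
          (measurable_id.sub measurable_const))).symm
    _ = ∫⁻ z in Iic t, ∫⁻ x, gaussianPDF 0 a x * gaussianPDF 0 b (z - x) := by
        rw [lintegral_lintegral_swap]
        exact hmeas2.aemeasurable
    _ = ∫⁻ z in Iic t, gaussianPDF 0 (a + b) z := by
        refine lintegral_congr fun z => ?_
        have : gaussianPDF 0 (a + b) z
            = ∫⁻ x, gaussianPDF 0 a x * gaussianPDF 0 b (z - x) := by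
          calc gaussianPDF 0 (a + b) z
              = ENNReal.ofReal (∫ x, gaussianPDFReal 0 a x * gaussianPDFReal 0 b (z - x)) := by
                rw [gaussianPDF, gaussianPDFReal_conv ha hb z]
            _ = ∫⁻ x, ENNReal.ofReal (gaussianPDFReal 0 a x * gaussianPDFReal 0 b (z - x)) :=
                ofReal_integral_eq_lintegral_ofReal (integrable_conv_integrand z)
                  (Filter.Eventually.of_forall fun x =>
                    mul_nonneg (gaussianPDFReal_nonneg _ _ _) (gaussianPDFReal_nonneg _ _ _))
            _ = ∫⁻ x, gaussianPDF 0 a x * gaussianPDF 0 b (z - x) := by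
                refine lintegral_congr fun x => ?_
                rw [gaussianPDF, gaussianPDF, ENNReal.ofReal_mul (gaussianPDFReal_nonneg _ _ _)]
        exact this.symm
    _ = gaussianReal 0 (a + b) (Iic t) := by
        rw [gaussianReal_of_var_ne_zero 0 hab, withDensity_apply _ measurableSet_Iic]

instance (p : ℕ) : IsProbabilityMeasure (stdGaussianPi p) := by
  unfold stdGaussianPi; infer_instance

lemma map_linear_stdGaussianPi (n : ℕ) (w : Fin n → ℝ) :
    Measure.map (fun y : Fin n → ℝ => ∑ i, w i * y i) (stdGaussianPi n)
      = gaussianReal 0 ⟨∑ i, w i ^ 2, by positivity⟩ := by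
  induction n with
  | zero =>
      have h0 : (⟨∑ i : Fin 0, w i ^ 2, by positivity⟩ : NNReal) = 0 := by
        ext; simp
      rw [h0]
      erw [gaussianReal_zero_var]
      have : (fun y : Fin 0 → ℝ => ∑ i, w i * y i) = fun _ => (0 : ℝ) := by
        funext y; simp
      rw [this, Measure.map_const, measure_univ, one_smul]
  | succ n ih =>
      set e := MeasurableEquiv.piFinSuccAbove (fun _ : Fin (n+1) => ℝ) 0 with he
      have hmp := measurePreserving_piFinSuccAbove (fun _ : Fin (n+1) => gaussianReal 0 1) 0
      set g : (Fin n → ℝ) → ℝ := fun y => ∑ j, w j.succ * y j with hg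
      have hgm : Measurable g := by fun_prop
      set h : ℝ × (Fin n → ℝ) → ℝ :=
        (fun r : ℝ × ℝ => r.1 + r.2) ∘ (Prod.map (fun x : ℝ => w 0 * x) g) with hh
      have hfe : (fun y : Fin (n+1) → ℝ => ∑ i, w i * y i) = h ∘ e := by
        funext y
        simp only [hh, he, Function.comp_apply, MeasurableEquiv.piFinSuccAbove_apply,
          Prod.map_apply, Fin.sum_univ_succ, hg]
        congr 1
      rw [hfe, ← Measure.map_map (by fun_prop) e.measurable]
      rw [show Measure.map (⇑e) (stdGaussianPi (n+1))
        = (gaussianReal 0 1).prod (stdGaussianPi n) from hmp.map_eq]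
      rw [hh, ← Measure.map_map (by fun_prop) (by fun_prop),
        ← Measure.map_prod_map _ _ (by fun_prop) hgm,
        gaussianReal_map_const_mul (w 0), ih (fun j => w j.succ), mul_zero,
        ]
      erw [gaussianReal_conv]
      congr 1
      ext
      push_cast
      show (w 0 ^ 2 * 1 + ∑ i : Fin n, w i.succ ^ 2 : ℝ) = ∑ i, w i ^ 2
      rw [Fin.sum_univ_succ]
      simp

section L3
variable {Ω : Type} [MeasurableSpace Ω] (μ : Measure Ω) [IsProbabilityMeasure μ]

lemma map_finset_sum_gaussian {ι : Type*} {X : ι → Ω → ℝ} (hmeas : ∀ i, Measurable (X i))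
    (hindep : iIndepFun X μ) (v : ι → NNReal)
    (hlaw : ∀ i, Measure.map (X i) μ = gaussianReal 0 (v i)) (s : Finset ι) :
    Measure.map (fun ω => ∑ i ∈ s, X i ω) μ = gaussianReal 0 (∑ i ∈ s, v i) := by
  classical
  induction s using Finset.induction with
  | empty =>
      simp only [Finset.sum_empty]
      rw [Measure.map_const, measure_univ, one_smul, gaussianReal_zero_var]
  | @insert a s ha ih =>
      have hsum_meas : Measurable (fun ω => ∑ i ∈ s, X i ω) := by
        exact Finset.measurable_sum s (fun i _ => hmeas i)
      have hIndep : IndepFun (fun ω => ∑ i ∈ s, X i ω) (X a) μ := by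
        have h := hindep.indepFun_finsetSum_of_notMem hmeas ha
        have heq : (∑ j ∈ s, X j) = fun ω => ∑ i ∈ s, X i ω := by
          funext ω; simp [Finset.sum_apply]
        rwa [heq] at h
      have hpair : Measure.map (fun ω => ((fun ω => ∑ i ∈ s, X i ω) ω, X a ω)) μ
          = (Measure.map (fun ω => ∑ i ∈ s, X i ω) μ).prod (Measure.map (X a) μ) :=
        (indepFun_iff_map_prod_eq_prod_map_map hsum_meas.aemeasurable
          (hmeas a).aemeasurable).mp hIndep
      have hcomp : (fun ω => ∑ i ∈ insert a s, X i ω)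
          = (fun q : ℝ × ℝ => q.1 + q.2) ∘ (fun ω => (∑ i ∈ s, X i ω, X a ω)) := by
        funext ω
        simp [Finset.sum_insert ha, add_comm]
      rw [hcomp, ← Measure.map_map (by fun_prop) (hsum_meas.prodMk (hmeas a)), hpair,
        ih, hlaw a, gaussianReal_conv, Finset.sum_insert ha, add_comm]

end L3

lemma integral_comp_mul_left_Iio (g : ℝ → ℝ) (a : ℝ) {b : ℝ} (hb : 0 < b) :
    (∫ x in Iio a, g (b * x)) = b⁻¹ • ∫ x in Iio (b * a), g x := by
  have : ∀ c : ℝ, MeasurableSet (Iio c) := fun c => measurableSet_Iio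
  rw [← integral_indicator (this a), ← integral_indicator (this (b * a)),
    ← abs_of_pos (inv_pos.mpr hb), ← Measure.integral_comp_mul_left]
  congr
  ext1 x
  rw [← indicator_comp_right, show HMul.hMul b ⁻¹' Iio (b * a) = Iio a by ext y; simp [hb, mul_div_cancel_left₀ a hb.ne']]
  rfl

lemma gaussianReal_Iio_toReal {v : NNReal} (hv : v ≠ 0) (c : ℝ) :
    ((gaussianReal 0 v) (Iio c)).toReal = Phi (c / Real.sqrt v) := by
  have hvpos : (0:ℝ) < v := by exact_mod_cast hv.bot_lt
  set σ : ℝ := Real.sqrt v with hσ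
  have hσpos : 0 < σ := Real.sqrt_pos.mpr hvpos
  rw [gaussianReal_apply_eq_integral 0 hv, ENNReal.toReal_ofReal
    (integral_nonneg fun x => gaussianPDFReal_nonneg _ _ _)]
  have key : ∫ x in Iio c, gaussianPDFReal 0 v x
      = ∫ u in Iio (c / σ), σ * gaussianPDFReal 0 v (σ * u) := by
    rw [integral_const_mul, integral_comp_mul_left_Iio _ _ hσpos,
      mul_div_cancel₀ _ hσpos.ne', smul_eq_mul, ← mul_assoc, mul_inv_cancel₀ hσpos.ne', one_mul]
  rw [key, Phi, ← integral_Iic_eq_integral_Iio]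
  refine setIntegral_congr_fun measurableSet_Iic (fun u _ => ?_)
  rw [gaussianPDFReal]
  have h1 : σ * σ = (v:ℝ) := Real.mul_self_sqrt hvpos.le
  have h2 : √(2 * π * v) = σ * √(2 * π) := by
    rw [← h1, show 2 * π * (σ * σ) = (σ*σ) * (2*π) by ring, Real.sqrt_mul (by positivity),
      Real.sqrt_mul_self hσpos.le]
  rw [h2]
  have h3 : -(σ * u - 0)^2 / (2 * v) = -(u^2) / 2 := by
    rw [← h1]; field_simp; ring
  rw [h3]
  field_simp

end Auxiliary

-- Phi basics
lemma Phi_eq (x : ℝ) : Phi x = ∫ t in Set.Iic x, gaussianPDFReal 0 1 t := by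
  unfold Phi
  refine setIntegral_congr_fun measurableSet_Iic (fun t _ => ?_)
  simp [gaussianPDFReal]

lemma monotone_Phi : Monotone Phi := by
  intro a b hab
  rw [Phi_eq, Phi_eq]
  refine setIntegral_mono_set (integrable_gaussianPDFReal 0 1).integrableOn
    (Filter.Eventually.of_forall fun t => gaussianPDFReal_nonneg 0 1 t)
    (HasSubset.Subset.eventuallyLE (Set.Iic_subset_Iic.mpr hab))

lemma measurable_Phi : Measurable Phi := monotone_Phi.measurable

lemma Phi_nonneg (x : ℝ) : 0 ≤ Phi x := by
  rw [Phi_eq]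
  exact setIntegral_nonneg measurableSet_Iic fun t _ => gaussianPDFReal_nonneg 0 1 t

lemma Phi_le_one (x : ℝ) : Phi x ≤ 1 := by
  rw [Phi_eq]
  calc ∫ t in Set.Iic x, gaussianPDFReal 0 1 t ≤ ∫ t, gaussianPDFReal 0 1 t :=
        setIntegral_le_integral (integrable_gaussianPDFReal 0 1)
          (Filter.Eventually.of_forall fun t => gaussianPDFReal_nonneg 0 1 t)
    _ = 1 := integral_gaussianPDFReal_eq_one 0 one_ne_zero

lemma measurable_l2norm (p : ℕ) : Measurable (l2norm (p := p)) := by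
  unfold l2norm
  exact (Real.continuous_sqrt.comp (by continuity)).measurable

/-- Let `Z_1, …, Z_T` be independent centered Gaussians in `ℝ^p` with
`Z_i ~ N(0, Σ_i)`, `Σ_1` positive definite and `∑_{i=2}^T Σ_i` positive definite. With
`S_T = Z_1 + ⋯ + Z_T` and `V_T = Z_2 + ⋯ + Z_T`,
`P(‖Z_1‖₂ > ‖S_T‖₂) = E_{V_T}[Φ(−‖V_T‖₂ / (2 ‖Σ_1^{1/2} (V_T/‖V_T‖₂)‖₂))]`.
(Here the family is indexed by `Fin T`, with `Z_1` the entry at index `⟨0, hT⟩`.) -/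
theorem stmt_13
    {Ω : Type} [MeasurableSpace Ω] (μ : Measure Ω) [IsProbabilityMeasure μ]
    (p T : ℕ) (hp : 1 ≤ p) (hT : 0 < T)
    (Z : Fin T → Ω → (Fin p → ℝ)) (hmeas : ∀ i, Measurable (Z i))
    (Covs : Fin T → Matrix (Fin p) (Fin p) ℝ)
    (hpsd : ∀ i, (Covs i).PosSemidef)
    (hindep : iIndepFun Z μ)
    (hlaw : ∀ i, Measure.map (Z i) μ = gaussianCov (Covs i) (hpsd i))
    (hCov1 : (Covs ⟨0, hT⟩).PosDef)
    (hV : (∑ i ∈ Finset.univ.filter (fun i => i ≠ (⟨0, hT⟩ : Fin T)), Covs i).PosDef) :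
    (μ {ω | l2norm (∑ i, Z i ω) < l2norm (Z ⟨0, hT⟩ ω)}).toReal
      = ∫ ω, Phi (-(l2norm (∑ i ∈ Finset.univ.filter (fun i => i ≠ (⟨0, hT⟩ : Fin T)), Z i ω))
            / (2 * l2norm ((hpsd ⟨0, hT⟩).sqrt.mulVec
                (fun j => (∑ i ∈ Finset.univ.filter (fun i => i ≠ (⟨0, hT⟩ : Fin T)), Z i ω) j
                  / l2norm (∑ i ∈ Finset.univ.filter
                      (fun i => i ≠ (⟨0, hT⟩ : Fin T)), Z i ω))))) ∂μ := by
  classical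
  set i₀ : Fin T := ⟨0, hT⟩ with hi₀
  set s : Finset (Fin T) := Finset.univ.filter (fun i => i ≠ i₀) with hs
  set A : Matrix (Fin p) (Fin p) ℝ := (hpsd i₀).sqrt with hA
  have hAsymm : ∀ j k, A j k = A k j := by
    intro j k
    have h := ((hpsd i₀).posSemidef_sqrt).1.apply j k
    simpa using h.symm
  set V : Ω → (Fin p → ℝ) := fun ω => ∑ i ∈ s, Z i ω with hVdef
  set X : Ω → (Fin p → ℝ) := fun ω => Z i₀ ω with hX
  have hVmeas : Measurable V := Finset.measurable_sum s (fun i _ => hmeas i)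
  have hXmeas : Measurable X := hmeas i₀
  set φ : (Fin p → ℝ) → ℝ := fun v =>
    -(l2norm v) / (2 * l2norm (A.mulVec (fun j => v j / l2norm v))) with hφ
  -- measurability of φ
  have hmulVec_cont : Continuous (fun u : Fin p → ℝ => A.mulVec u) := by
    have : (fun u : Fin p → ℝ => A.mulVec u) = fun u => A.mulVecLin u := by
      funext u; rw [Matrix.mulVecLin_apply]
    rw [this]
    exact LinearMap.continuous_on_pi _
  have hφm : Measurable φ := by
    apply Measurable.div
    · exact (measurable_l2norm p).neg
    · apply Measurable.const_mul
      exact (measurable_l2norm p).comp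
        (hmulVec_cont.measurable.comp
          (measurable_pi_lambda _ fun j => (measurable_pi_apply j).div (measurable_l2norm p)))
  -- the event set in product space
  set E : Set ((Fin p → ℝ) × (Fin p → ℝ)) :=
    {q | ∑ j, (2 * (q.2 j * q.1 j) + q.1 j ^ 2) < 0} with hE
  have hEmeas : MeasurableSet E := by
    apply measurableSet_lt _ measurable_const
    apply Finset.measurable_sum
    intro j _
    apply Measurable.add
    · exact (((measurable_pi_apply j).comp measurable_snd).mul
        ((measurable_pi_apply j).comp measurable_fst)).const_mul 2
    · exact ((measurable_pi_apply j).comp measurable_fst).pow_const 2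
  -- event rewrite
  have hsplit : ∀ ω, ∑ i, Z i ω = X ω + V ω := by
    intro ω
    rw [hVdef, hX, hs, Finset.filter_ne']
    exact (Finset.add_sum_erase Finset.univ _ (Finset.mem_univ i₀)).symm
  have hiff : ∀ x v : Fin p → ℝ,
      (l2norm (x + v) < l2norm x ↔ ∑ j, (2 * (x j * v j) + v j ^ 2) < 0) := by
    intro x v
    unfold l2norm
    rw [Real.sqrt_lt_sqrt_iff (by positivity)]
    have hexp : ∀ j, ((x + v) j) ^ 2 = x j ^ 2 + (2 * (x j * v j) + v j ^ 2) := by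
      intro j; simp only [Pi.add_apply]; ring
    rw [Finset.sum_congr rfl fun j _ => hexp j, Finset.sum_add_distrib]
    constructor
    · intro h; linarith
    · intro h; linarith
  have hEvent : {ω | l2norm (∑ i, Z i ω) < l2norm (Z i₀ ω)}
      = (fun ω => (V ω, X ω)) ⁻¹' E := by
    ext ω
    simp only [Set.mem_setOf_eq, Set.mem_preimage, hE, hsplit ω]
    exact hiff (X ω) (V ω)
  -- independence and joint law
  have hindepVX : IndepFun V X μ := by
    have h := hindep.indepFun_finsetSum_of_notMem hmeas
      (show i₀ ∉ s by simp [hs])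
    have heq : (∑ j ∈ s, Z j) = V := by
      funext ω; rw [hVdef]; simp [Finset.sum_apply]
    rwa [heq] at h
  have hjoint : μ.map (fun ω => (V ω, X ω)) = (μ.map V).prod (μ.map X) :=
    (indepFun_iff_map_prod_eq_prod_map_map hVmeas.aemeasurable hXmeas.aemeasurable).mp hindepVX
  have : IsProbabilityMeasure (μ.map X) := Measure.isProbabilityMeasure_map hXmeas.aemeasurable
  have : IsProbabilityMeasure (μ.map V) := Measure.isProbabilityMeasure_map hVmeas.aemeasurable
  -- a.e. nonvanishing of V
  have hV0 : (μ.map V) {0} = 0 := by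
    rw [Measure.map_apply hVmeas (measurableSet_singleton 0)]
    set j₀ : Fin p := ⟨0, hp⟩ with hj₀
    set W : Fin T → Ω → ℝ := fun i ω => Z i ω j₀ with hW
    have hWmeas : ∀ i, Measurable (W i) := fun i => (measurable_pi_apply j₀).comp (hmeas i)
    have hWindep : iIndepFun W μ :=
      hindep.comp (fun _ => fun x : Fin p → ℝ => x j₀) (fun _ => measurable_pi_apply j₀)
    set vv : Fin T → NNReal := fun i => ⟨∑ k, ((hpsd i).sqrt j₀ k)^2, by positivity⟩ with hvv
    have hWlaw : ∀ i, μ.map (W i) = gaussianReal 0 (vv i) := by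
      intro i
      have hmv : Measurable fun x : Fin p → ℝ => (hpsd i).sqrt.mulVec x := by
        have : (fun u : Fin p → ℝ => (hpsd i).sqrt.mulVec u)
            = fun u => (hpsd i).sqrt.mulVecLin u := by
          funext u; rw [Matrix.mulVecLin_apply]
        rw [this]; exact (LinearMap.continuous_on_pi _).measurable
      have h1 : μ.map (W i) = Measure.map (fun y : Fin p → ℝ => y j₀) (μ.map (Z i)) := by
        rw [Measure.map_map (measurable_pi_apply j₀) (hmeas i)]; rfl
      rw [h1, hlaw i, gaussianCov, Measure.map_map (measurable_pi_apply j₀) hmv]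
      have h2 : ((fun y : Fin p → ℝ => y j₀) ∘ fun x => (hpsd i).sqrt.mulVec x)
          = fun y => ∑ k, (hpsd i).sqrt j₀ k * y k := by
        funext y; simp [Function.comp, Matrix.mulVec, dotProduct]
      rw [h2, map_linear_stdGaussianPi]
    have hsum := map_finset_sum_gaussian μ hWmeas hWindep vv hWlaw s
    have hdiag : ∀ i, ((vv i : NNReal) : ℝ) = Covs i j₀ j₀ := by
      intro i
      show (∑ k, ((hpsd i).sqrt j₀ k)^2) = Covs i j₀ j₀
      conv_rhs => rw [← (hpsd i).sqrt_mul_self]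
      rw [Matrix.mul_apply]
      refine Finset.sum_congr rfl fun k _ => ?_
      have hsymm : (hpsd i).sqrt k j₀ = (hpsd i).sqrt j₀ k := by
        have h := ((hpsd i).posSemidef_sqrt).1.apply j₀ k
        simpa using h
      rw [hsymm, sq]
    have hvpos : (∑ i ∈ s, vv i) ≠ 0 := by
      have hpos : (0:ℝ) < ((∑ i ∈ s, vv i : NNReal) : ℝ) := by
        push_cast
        have : ∀ i ∈ s, ((vv i : NNReal) : ℝ) = Covs i j₀ j₀ := fun i _ => hdiag i
        rw [Finset.sum_congr rfl this]
        have hq := hV.dotProduct_mulVec_pos (x := Pi.single j₀ 1) (by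
          intro h
          have := congrFun h j₀
          simp at this)
        have hq' : (0:ℝ) < (∑ i ∈ s, Covs i) j₀ j₀ := by
          simpa [Matrix.mulVec_single, single_dotProduct] using hq
        have hcast : (∑ i ∈ s, Covs i) j₀ j₀ = ∑ i ∈ s, Covs i j₀ j₀ := by
          simp [Matrix.sum_apply]
        rwa [hcast] at hq'
      intro h
      rw [h] at hpos
      simp at hpos
    have h0 : μ ((fun ω => ∑ i ∈ s, W i ω) ⁻¹' {0}) = 0 := by
      rw [← Measure.map_apply (Finset.measurable_sum s fun i _ => hWmeas i)
        (measurableSet_singleton 0), hsum]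
      exact (gaussianReal_absolutelyContinuous 0 hvpos) Real.volume_singleton
    refine measure_mono_null (fun ω hω => ?_) h0
    have : V ω = 0 := hω
    simp only [Set.mem_preimage, Set.mem_singleton_iff]
    calc ∑ i ∈ s, W i ω = (∑ i ∈ s, Z i ω) j₀ := by rw [Finset.sum_apply]
      _ = V ω j₀ := rfl
      _ = 0 := by rw [this]; rfl
  have haeV : ∀ᵐ v ∂(μ.map V), v ≠ 0 := by
    rw [ae_iff]
    convert hV0 using 2
    ext v
    simp
  -- inner slice computation
  have hinner : ∀ v : Fin p → ℝ, v ≠ 0 →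
      (μ.map X) (Prod.mk v ⁻¹' E) = ENNReal.ofReal (Phi (φ v)) := by
    intro v hv
    set w : Fin p → ℝ := A.mulVec v with hw
    set c : ℝ := -(∑ j, v j ^ 2) / 2 with hc
    have hlinmeas : Measurable fun x : Fin p → ℝ => ∑ j, x j * v j :=
      Finset.measurable_sum _ fun j _ => by fun_prop
    have hwlinmeas : Measurable fun y : Fin p → ℝ => ∑ k, w k * y k :=
      Finset.measurable_sum _ fun k _ => by fun_prop
    have h1 : Prod.mk v ⁻¹' E = (fun x : Fin p → ℝ => ∑ j, x j * v j) ⁻¹' (Set.Iio c) := by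
      ext x
      simp only [Set.mem_preimage, Set.mem_setOf_eq, Set.mem_Iio, hE]
      rw [Finset.sum_add_distrib]
      have h2sum : ∑ j, 2 * (x j * v j) = 2 * ∑ j, x j * v j := by
        rw [Finset.mul_sum]
      rw [h2sum, hc]
      constructor
      · intro h; linarith
      · intro h; linarith
    rw [h1]
    have hXlaw : μ.map X = Measure.map (fun x => A.mulVec x) (stdGaussianPi p) := hlaw i₀
    rw [hXlaw, Measure.map_apply hmulVec_cont.measurable (hlinmeas measurableSet_Iio)]
    have h2 : (fun x : Fin p → ℝ => A.mulVec x) ⁻¹' ((fun x => ∑ j, x j * v j) ⁻¹' Set.Iio c)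
        = (fun y : Fin p → ℝ => ∑ k, w k * y k) ⁻¹' Set.Iio c := by
      ext y
      simp only [Set.mem_preimage, Set.mem_Iio]
      have heq : ∑ j, (A.mulVec y) j * v j = ∑ k, w k * y k := by
        calc ∑ j, (A.mulVec y) j * v j = ∑ j, ∑ k, A j k * y k * v j := by
              refine Finset.sum_congr rfl fun j _ => ?_
              rw [Matrix.mulVec, dotProduct, Finset.sum_mul]
          _ = ∑ k, ∑ j, A j k * y k * v j := Finset.sum_comm
          _ = ∑ k, w k * y k := by
              refine Finset.sum_congr rfl fun k _ => ?_
              rw [hw, Matrix.mulVec, dotProduct, Finset.sum_mul]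
              refine Finset.sum_congr rfl fun j _ => ?_
              rw [hAsymm j k]; ring
      rw [heq]
    rw [h2, ← Measure.map_apply hwlinmeas measurableSet_Iio, map_linear_stdGaussianPi]
    have hW2 : (0:ℝ) < ∑ k, w k ^ 2 := by
      have hq := hCov1.dotProduct_mulVec_pos hv
      have hsv : star v = v := star_trivial v
      have heq : dotProduct (star v) ((Covs i₀).mulVec v) = ∑ k, w k ^ 2 := by
        rw [hsv]
        conv_lhs => rw [← (hpsd i₀).sqrt_mul_self, ← Matrix.mulVec_mulVec]
        rw [← hA, Matrix.dotProduct_mulVec]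
        have hvm : Matrix.vecMul v A = w := by
          funext k
          rw [hw]
          simp only [Matrix.vecMul, Matrix.mulVec, dotProduct]
          refine Finset.sum_congr rfl fun j _ => ?_
          rw [hAsymm k j]; ring
        rw [hvm, dotProduct]
        exact Finset.sum_congr rfl fun k _ => (sq (w k)).symm
      rw [heq] at hq
      exact hq
    set W2 : NNReal := ⟨∑ k, w k ^ 2, by positivity⟩ with hW2def
    have hW2ne : W2 ≠ 0 := by
      intro h
      have := congrArg (fun x : NNReal => (x : ℝ)) h
      simp only [hW2def, NNReal.coe_mk, NNReal.coe_zero] at this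
      exact hW2.ne' this
    rw [show (gaussianReal 0 W2 (Set.Iio c)) = ENNReal.ofReal ((gaussianReal 0 W2 (Set.Iio c)).toReal)
      from (ENNReal.ofReal_toReal (measure_ne_top _ _)).symm]
    rw [gaussianReal_Iio_toReal hW2ne c]
    refine congrArg ENNReal.ofReal (congrArg Phi ?_)
    -- argument equality
    have hsumv : (0:ℝ) < ∑ j, v j ^ 2 := by
      obtain ⟨j, hj⟩ := Function.ne_iff.mp hv
      refine Finset.sum_pos' (fun j _ => sq_nonneg _) ⟨j, Finset.mem_univ j, ?_⟩
      have : v j ≠ 0 := hj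
      positivity
    set ℓ : ℝ := l2norm v with hℓ
    have hℓpos : 0 < ℓ := Real.sqrt_pos.mpr hsumv
    have hℓsq : ℓ ^ 2 = ∑ j, v j ^ 2 := Real.sq_sqrt hsumv.le
    have hWc : ((W2 : NNReal) : ℝ) = ∑ k, w k ^ 2 := rfl
    have hsqW : (0:ℝ) < Real.sqrt (W2 : ℝ) := Real.sqrt_pos.mpr (by rw [hWc]; exact hW2)
    have hvecdiv : (fun j => v j / l2norm v) = (ℓ⁻¹ • v : Fin p → ℝ) := by
      funext j
      simp [hℓ, div_eq_inv_mul]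
    have hnorm : l2norm (A.mulVec (fun j => v j / l2norm v)) = ℓ⁻¹ * Real.sqrt (W2:ℝ) := by
      rw [hvecdiv, Matrix.mulVec_smul, ← hw]
      unfold l2norm
      have : ∀ k, ((ℓ⁻¹ • w) k) ^ 2 = (ℓ⁻¹)^2 * (w k)^2 := by
        intro k; simp [mul_pow]
      rw [Finset.sum_congr rfl fun k _ => this k, ← Finset.mul_sum,
        Real.sqrt_mul (sq_nonneg _), Real.sqrt_sq_eq_abs, abs_of_pos (by positivity)]
      rw [hWc]
    show c / Real.sqrt (W2:ℝ)
        = -l2norm v / (2 * l2norm (A.mulVec (fun j => v j / l2norm v)))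
    rw [hnorm, hc, ← hℓ, ← hℓsq]
    field_simp
  -- main calc
  have hπmeas : Measurable (fun ω => (V ω, X ω)) := hVmeas.prodMk hXmeas
  rw [hEvent, ← Measure.map_apply hπmeas hEmeas, hjoint,
    Measure.prod_apply hEmeas]
  have hlint : ∫⁻ v, (μ.map X) (Prod.mk v ⁻¹' E) ∂(μ.map V)
      = ∫⁻ v, ENNReal.ofReal (Phi (φ v)) ∂(μ.map V) := by
    refine lintegral_congr_ae ?_
    filter_upwards [haeV] with v hv
    exact hinner v hv
  rw [hlint]
  have hrhs : ∫⁻ v, ENNReal.ofReal (Phi (φ v)) ∂(μ.map V)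
      = ENNReal.ofReal (∫ v, Phi (φ v) ∂(μ.map V)) := by
    rw [← ofReal_integral_eq_lintegral_ofReal]
    · refine Integrable.mono' (integrable_const 1) ((measurable_Phi.comp hφm).aestronglyMeasurable) ?_
      refine Filter.Eventually.of_forall fun v => ?_
      rw [Real.norm_eq_abs, abs_of_nonneg (Phi_nonneg _)]
      exact Phi_le_one _
    · exact Filter.Eventually.of_forall fun v => Phi_nonneg _
  rw [hrhs, ENNReal.toReal_ofReal (integral_nonneg fun v => Phi_nonneg _)]
  have hfin := integral_map (μ := μ) (φ := V) (f := fun v => Phi (φ v)) hVmeas.aemeasurable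
    ((measurable_Phi.comp hφm).aestronglyMeasurable)
  rw [hfin]
end
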